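/- arXiv:1406.2740 — 3 statements merged into one kernel-verified Lean document; each statement's English description precedes it below -/
import Mathlib

section
/- Let f : ∂F_d → ℂ be a continuous function such that f(g·w^{+∞}) = f(g·w^{-∞}) for all g ∈ F_d and all w ∈ F_d \ {e}. Then f is constant. -/
/-- The alphabet of the free group on `d` generators: a generator together with
a sign (`true` = the generator itself, `false` = its inverse). -/
abbrev Letter (d : ℕ) := Fin d × Bool

/-- The inverse of a letter. -/
def Letter.inv {d : ℕ} (a : Letter d) : Letter d := (a.1, !a.2)

/-- A sequence of letters is reduced if no letter is followed by its inverse. -/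
def IsReducedSeq {d : ℕ} (x : ℕ → Letter d) : Prop :=
  ∀ n, x (n + 1) ≠ Letter.inv (x n)

/-- The boundary `∂F_d` of the free group on `d` generators: the space of
infinite reduced words, topologized as a subspace of the product space
`(Fin d × Bool)^ℕ` (each factor discrete). -/
abbrev Boundary (d : ℕ) := {x : ℕ → Letter d // IsReducedSeq x}

/-- The number of letters cancelled at the junction when the (finite reduced)
word `u` is concatenated with the infinite reduced word `x`. -/
def cancelLen {d : ℕ} (u : List (Letter d)) (x : ℕ → Letter d) : ℕ :=
  Nat.findGreatest (fun k => ∀ i < k, u[u.length - 1 - i]? = some (Letter.inv (x i))) u.length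

/-- The reduction of the concatenation of a finite reduced word `u` with an
infinite reduced word `x`. -/
def concatReduce {d : ℕ} (u : List (Letter d)) (x : ℕ → Letter d) : ℕ → Letter d :=
  fun n =>
    let k := cancelLen u x
    let m := u.length - k
    if h : n < m then u[n]'(by omega) else x (k + (n - m))

open Classical in
/-- The boundary action of the free group on its boundary: left multiplication
followed by free reduction.  (The `if` always takes the `then` branch, since the
reduction of the concatenation of reduced words is again reduced; hence this is
exactly the usual boundary action `g · x`.) -/
noncomputable def boundaryAct {d : ℕ} (g : FreeGroup (Fin d)) (x : Boundary d) : Boundary d :=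
  if h : IsReducedSeq (concatReduce (FreeGroup.toWord g) x.1) then
    ⟨concatReduce (FreeGroup.toWord g) x.1, h⟩
  else x

/-- `x` is the boundary point `w^{+∞}`, the limit of the sequence `(wⁿ)ₙ₌₁^∞`:
for every `k` there is `N` such that for all `n ≥ N` the reduced word of `wⁿ`
has length at least `k` and its first `k` letters agree with those of `x`.
The point `w^{-∞}` is `(w⁻¹)^{+∞}`, i.e. `IsPlusLimit w⁻¹`. -/
def IsPlusLimit {d : ℕ} (w : FreeGroup (Fin d)) (x : Boundary d) : Prop :=
  ∀ k : ℕ, ∃ N : ℕ, ∀ n ≥ N,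
    k ≤ (FreeGroup.toWord (w ^ n)).length ∧
    ∀ i < k, (FreeGroup.toWord (w ^ n))[i]? = some (x.1 i)

/-- The relation `R_W = Δ ∪ {(g·w^{+∞}, g·w^{-∞}) : g ∈ F_d, w ∈ W ∪ W⁻¹}`
on the boundary `∂F_d`. -/
def RW {d : ℕ} (W : Set (FreeGroup (Fin d))) : Set (Boundary d × Boundary d) :=
  {p | p.1 = p.2} ∪
  {p | ∃ (g w : FreeGroup (Fin d)) (xp xm : Boundary d),
      (w ∈ W ∨ w⁻¹ ∈ W) ∧ IsPlusLimit w xp ∧ IsPlusLimit w⁻¹ xm ∧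
      p.1 = boundaryAct g xp ∧ p.2 = boundaryAct g xm}

open Classical in
/-- `p[w]` : the (`ℤ`-valued) indicator function of the cylinder set of the
reduced word of `w` in the boundary. -/
noncomputable def pFun {d : ℕ} (w : FreeGroup (Fin d)) : Boundary d → ℤ :=
  fun x =>
    if ∀ i < (FreeGroup.toWord w).length, (FreeGroup.toWord w)[i]? = some (x.1 i) then 1 else 0

/-- `q[s] = p[s] + p[s⁻¹]` for a generator `s`. -/
noncomputable def qFun {d : ℕ} (s : Fin d) : Boundary d → ℤ :=
  fun x => pFun (FreeGroup.of s) x + pFun (FreeGroup.of s)⁻¹ x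

/-- `q[sⁿ] = p[sⁿ] + p[s⁻ⁿ]` for a generator `s`. -/
noncomputable def qPow {d : ℕ} (s : Fin d) (n : ℕ) : Boundary d → ℤ :=
  fun x => pFun (FreeGroup.of s ^ n) x + pFun ((FreeGroup.of s ^ n)⁻¹) x

/-- The map `w ↦ ŵ` flipping the sign of the exponent of the last syllable of
the reduced word of `w`: if `w = s_{i(1)}^{n(1)} ⋯ s_{i(k)}^{n(k)}` then
`ŵ = s_{i(1)}^{n(1)} ⋯ s_{i(k-1)}^{n(k-1)} s_{i(k)}^{-n(k)}`.  (The final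
syllable is the maximal terminal run of equal letters of the reduced word.) -/
def hatWord {d : ℕ} (w : FreeGroup (Fin d)) : FreeGroup (Fin d) :=
  match (FreeGroup.toWord w).reverse with
  | [] => w
  | a :: _ =>
    let k := ((FreeGroup.toWord w).reverse.takeWhile (fun b => b == a)).length
    FreeGroup.mk ((FreeGroup.toWord w).take ((FreeGroup.toWord w).length - k) ++
      List.replicate k (Letter.inv a))


namespace AuxProof
variable {d : ℕ}

@[simp] lemma linv_inv (a : Letter d) : Letter.inv (Letter.inv a) = a := by
  simp [Letter.inv]

@[simp] lemma inv_ne_self (a : Letter d) : Letter.inv a ≠ a := by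
  simp [Letter.inv, Prod.ext_iff]

lemma getElem_idx {α : Type*} (l : List α) {i j : ℕ} (hij : i = j) (h : i < l.length) :
    l[i]'h = l[j]'(hij ▸ h) := by subst hij; rfl

lemma getElem_list_congr {α : Type*} {l l' : List α} (h : l = l') {i : ℕ} (hi : i < l.length) :
    l[i]'hi = l'[i]'(h ▸ hi) := by subst h; rfl

/-- reduce is the identity on reduced lists. -/
lemma reduce_eq_self : ∀ {L : List (Letter d)},
    (∀ i (hi : i + 1 < L.length), L[i+1] ≠ Letter.inv (L[i]'(by omega))) →
    FreeGroup.reduce L = L := by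
  intro L
  induction L with
  | nil => intro _; rfl
  | cons x L ih =>
    intro hL
    have hred : FreeGroup.reduce L = L := by
      apply ih
      intro i hi
      have := hL (i+1) (by simpa using Nat.succ_lt_succ hi)
      simpa using this
    rw [FreeGroup.reduce.cons, hred]
    cases L with
    | nil => rfl
    | cons hd tl =>
      have h0 := hL 0 (by simp)
      simp only [List.getElem_cons_succ, List.getElem_cons_zero] at h0
      have : ¬ (x.1 = hd.1 ∧ x.2 = !hd.2) := by
        rintro ⟨h1, h2⟩
        apply h0
        simp [Letter.inv, Prod.ext_iff, h1.symm]
        cases hx : x.2 <;> cases hh : hd.2 <;> simp_all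
      simp [this]

/-- The periodic sequence with period the list `u`. -/
def per (u : List (Letter d)) (hu : 0 < u.length) : ℕ → Letter d :=
  fun i => u[i % u.length]'(Nat.mod_lt _ hu)

lemma per_eq (u : List (Letter d)) (hu : 0 < u.length) {i : ℕ} (h : i < u.length) :
    per u hu i = u[i] := by
  simp [per, Nat.mod_eq_of_lt h]

lemma succ_mod (n L : ℕ) (hL : 0 < L) :
    (n + 1) % L = if n % L + 1 = L then 0 else n % L + 1 := by
  have h0 : n % L < L := Nat.mod_lt _ hL
  by_cases hh : n % L + 1 = L
  · have hdvd : L ∣ n + 1 := by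
      refine ⟨n / L + 1, ?_⟩
      have := Nat.div_add_mod n L
      rw [Nat.mul_add, Nat.mul_one]
      omega
    rw [if_pos hh, Nat.mod_eq_zero_of_dvd hdvd]
  · rw [if_neg hh]
    conv_lhs => rw [← Nat.mod_add_div n L]
    rw [Nat.add_right_comm, Nat.add_mul_mod_self_left, Nat.mod_eq_of_lt (by omega)]

lemma isReducedSeq_per (u : List (Letter d)) (hu : 0 < u.length)
    (hchain : ∀ i (hi : i + 1 < u.length), u[i+1] ≠ Letter.inv (u[i]'(by omega)))
    (hcyc : u[0]'(hu) ≠ Letter.inv (u[u.length - 1]'(by omega))) :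
    IsReducedSeq (per u hu) := by
  intro n
  have hmod : n % u.length < u.length := Nat.mod_lt _ hu
  by_cases hh : n % u.length + 1 = u.length
  · have h1 : (n+1) % u.length = 0 := by rw [succ_mod n u.length hu, if_pos hh]
    have h2 : n % u.length = u.length - 1 := by omega
    simp only [per, h1, h2]
    exact hcyc
  · have h1 : (n+1) % u.length = n % u.length + 1 := by rw [succ_mod n u.length hu, if_neg hh]
    simp only [per, h1]
    exact hchain _ (by omega)

lemma join_len (u : List (Letter d)) (n : ℕ) :
    (List.flatten (List.replicate n u)).length = n * u.length := by
  induction n with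
  | zero => simp
  | succ n ih => simp [List.replicate_succ, ih]; ring

lemma join_getElem? (u : List (Letter d)) (hu : 0 < u.length) :
    ∀ n i, i < n * u.length →
      (List.flatten (List.replicate n u))[i]? = some (per u hu i) := by
  intro n
  induction n with
  | zero => intro i hi; omega
  | succ n ih =>
    intro i hi
    rw [List.replicate_succ, List.flatten_cons]
    by_cases hlt : i < u.length
    · rw [List.getElem?_append_left hlt, List.getElem?_eq_getElem hlt, per_eq u hu hlt]
    · push_neg at hlt
      have hexp : (n+1) * u.length = n * u.length + u.length := by ring
      rw [List.getElem?_append_right hlt, ih _ (by omega)]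
      congr 1
      unfold per
      congr 1
      conv_rhs => rw [← Nat.sub_add_cancel hlt, Nat.add_mod_right]

lemma mk_pow (u : List (Letter d)) (n : ℕ) :
    (FreeGroup.mk u) ^ n = FreeGroup.mk (List.flatten (List.replicate n u)) := by
  induction n with
  | zero => simp [FreeGroup.one_eq_mk]
  | succ n ih =>
    rw [pow_succ', ih, List.replicate_succ, List.flatten_cons, ← FreeGroup.mul_mk]

lemma toWord_mk_pow (u : List (Letter d)) (hu : 0 < u.length)
    (hper : IsReducedSeq (per u hu)) (n : ℕ) :
    (FreeGroup.mk u ^ n).toWord = List.flatten (List.replicate n u) := by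
  rw [mk_pow, FreeGroup.toWord_mk]
  apply reduce_eq_self
  intro i hi
  rw [join_len] at hi
  have h1 := join_getElem? u hu n (i+1) hi
  have h2 := join_getElem? u hu n i (by omega)
  rw [List.getElem?_eq_getElem (by rw [join_len]; omega)] at h1
  rw [List.getElem?_eq_getElem (by rw [join_len]; omega)] at h2
  rw [Option.some_inj] at h1 h2
  rw [h1, h2]
  exact hper i

lemma plusLimit_per (u : List (Letter d)) (hu : 0 < u.length)
    (hper : IsReducedSeq (per u hu)) :
    IsPlusLimit (FreeGroup.mk u) ⟨per u hu, hper⟩ := by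
  intro k
  refine ⟨k, fun n hn => ?_⟩
  have htw := toWord_mk_pow u hu hper n
  have hnk : k ≤ n * u.length := le_trans hn (by calc
    n = n * 1 := (mul_one n).symm
    _ ≤ n * u.length := Nat.mul_le_mul_left n hu)
  constructor
  · rw [htw, join_len]; exact hnk
  · intro i hik
    rw [htw]
    exact join_getElem? u hu n i (by omega)

lemma invRev_getElem (L : List (Letter d)) (j : ℕ) (hj : j < L.length) :
    (FreeGroup.invRev L)[j]'(by rw [FreeGroup.invRev_length]; exact hj) =
      Letter.inv (L[L.length - 1 - j]'(by omega)) := by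
  unfold FreeGroup.invRev
  rw [List.getElem_reverse, List.getElem_map]
  simp [Letter.inv]

lemma chain_invRev (u : List (Letter d)) (hu : 0 < u.length)
    (hchain : ∀ i (hi : i + 1 < u.length), u[i+1] ≠ Letter.inv (u[i]'(by omega)))
    (hcyc : u[0]'(hu) ≠ Letter.inv (u[u.length - 1]'(by omega))) :
    (∀ i (hi : i + 1 < (FreeGroup.invRev u).length),
        (FreeGroup.invRev u)[i+1] ≠ Letter.inv ((FreeGroup.invRev u)[i]'(by omega))) ∧
    (FreeGroup.invRev u)[0]'(by rw [FreeGroup.invRev_length]; exact hu) ≠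
      Letter.inv ((FreeGroup.invRev u)[(FreeGroup.invRev u).length - 1]'
        (by rw [FreeGroup.invRev_length]; omega)) := by
  have hL : (FreeGroup.invRev u).length = u.length := FreeGroup.invRev_length
  constructor
  · intro i hi
    rw [hL] at hi
    rw [invRev_getElem u (i+1) (by omega), invRev_getElem u i (by omega), linv_inv]
    have hj1 : u.length - 1 - i = (u.length - 1 - (i+1)) + 1 := by omega
    rw [getElem_idx u hj1]
    exact Ne.symm (hchain (u.length - 1 - (i+1)) (by omega))
  · have e0 : (FreeGroup.invRev u).length - 1 = u.length - 1 := by rw [hL]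
    rw [getElem_idx (FreeGroup.invRev u) e0]
    rw [invRev_getElem u 0 hu, invRev_getElem u (u.length - 1) (by omega), linv_inv]
    rw [getElem_idx u (show u.length - 1 - (u.length - 1) = 0 by omega)]
    exact Ne.symm hcyc

lemma boundaryAct_one (x : Boundary d) : boundaryAct (1 : FreeGroup (Fin d)) x = x := by
  have h1 : concatReduce (FreeGroup.toWord (1 : FreeGroup (Fin d))) x.1 = x.1 := by
    funext n
    simp [concatReduce, cancelLen, FreeGroup.toWord_one]; exact congrArg x.1 (Nat.zero_add n)
  unfold boundaryAct
  split
  · exact Subtype.ext h1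
  · rfl

lemma tendsto_boundary (x : Boundary d) (y : ℕ → Boundary d)
    (hy : ∀ k, ∀ i < k, (y k).1 i = x.1 i) :
    Filter.Tendsto y Filter.atTop (nhds x) := by
  rw [tendsto_subtype_rng, tendsto_pi_nhds]
  intro i
  rw [show nhds (x.1 i) = pure (x.1 i) from by
    rw [nhds_discrete], Filter.tendsto_pure]
  filter_upwards [Filter.eventually_ge_atTop (i+1)] with k hk
  exact hy k i (by omega)

lemma exists_letter (hd : 2 ≤ d) (a b : Letter d) : ∃ m : Letter d, m ≠ a ∧ m ≠ b := by
  have h0 : (0 : ℕ) < d := by omega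
  have h1 : (1 : ℕ) < d := by omega
  set c1 : Letter d := (⟨0, h0⟩, true) with hc1
  set c2 : Letter d := (⟨0, h0⟩, false) with hc2
  set c3 : Letter d := (⟨1, h1⟩, true) with hc3
  have hne12 : c1 ≠ c2 := by simp [hc1, hc2]
  have hne13 : c1 ≠ c3 := by simp [hc1, hc3, Prod.ext_iff, Fin.ext_iff]
  have hne23 : c2 ≠ c3 := by simp [hc2, hc3, Prod.ext_iff, Fin.ext_iff]
  by_contra hcon
  push_neg at hcon
  rcases eq_or_ne c1 a with e1 | e1
  · rcases eq_or_ne c2 a with e2 | e2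
    · exact hne12 (e1.trans e2.symm)
    · rcases eq_or_ne c3 a with e3 | e3
      · exact hne13 (e1.trans e3.symm)
      · exact hne23 ((hcon c2 e2).trans (hcon c3 e3).symm)
  · rcases eq_or_ne c2 a with e2 | e2
    · rcases eq_or_ne c3 a with e3 | e3
      · exact hne23 (e2.trans e3.symm)
      · exact hne13 ((hcon c1 e1).trans (hcon c3 e3).symm)
    · exact hne12 ((hcon c1 e1).trans (hcon c2 e2).symm)

lemma step (hd : 2 ≤ d) (f : Boundary d → ℂ) (hf : Continuous f)
    (h : ∀ (g w : FreeGroup (Fin d)), w ≠ 1 →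
      ∀ xp xm : Boundary d, IsPlusLimit w xp → IsPlusLimit w⁻¹ xm →
        f (boundaryAct g xp) = f (boundaryAct g xm))
    (x y : Boundary d) (hxy : x.1 0 ≠ y.1 0) : f x = f y := by
  have key : ∀ k : ℕ, ∃ xp xm : Boundary d,
      (∀ i < k, xp.1 i = x.1 i) ∧ (∀ i < k, xm.1 i = y.1 i) ∧ f xp = f xm := by
    intro k
    obtain ⟨m, hma, hmb⟩ := exists_letter hd (Letter.inv (x.1 k)) (y.1 k)
    set K := k + 1 with hK
    set a : List (Letter d) := List.ofFn (fun i : Fin K => x.1 i) with ha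
    set b : List (Letter d) := List.ofFn (fun i : Fin K => y.1 i) with hb
    have hal : a.length = K := by simp [ha, hK]
    have hbl : b.length = K := by simp [hb, hK]
    set u : List (Letter d) := a ++ [m] ++ FreeGroup.invRev b with hu_def
    have hlen : u.length = 2 * K + 1 := by
      simp only [hu_def, List.length_append, FreeGroup.invRev_length, hal, hbl,
        List.length_singleton]
      omega
    have hupos : 0 < u.length := by omega
    have hlam : (a ++ [m]).length = K + 1 := by simp [hal]
    -- getElem facts
    have F1 : ∀ i (hi : i < K), u[i]'(by omega) = x.1 i := by
      intro i hi
      rw [getElem_list_congr hu_def]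
      rw [List.getElem_append_left (by rw [hlam]; omega)]
      rw [List.getElem_append_left (by rw [hal]; omega)]
      rw [getElem_list_congr ha, List.getElem_ofFn]
    have F2 : u[K]'(by omega) = m := by
      rw [getElem_list_congr hu_def]
      rw [List.getElem_append_left (by rw [hlam]; omega)]
      rw [List.getElem_append_right (le_of_eq hal)]
      simp [hal]
    have F3 : ∀ j (hj1 : K < j) (hj2 : j < 2*K + 1),
        u[j]'(by omega) = Letter.inv (y.1 (2*K - j)) := by
      intro j hj1 hj2
      rw [getElem_list_congr hu_def]
      rw [List.getElem_append_right (by rw [hlam]; omega)]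
      have hidx : j - (a ++ [m]).length = j - (K+1) := by rw [hlam]
      rw [getElem_idx _ hidx]
      rw [invRev_getElem b (j - (K+1)) (by omega)]
      rw [getElem_idx b (show b.length - 1 - (j - (K+1)) = 2*K - j by omega)]
      congr 1
      simp only [hb]
      rw [List.getElem_ofFn]
    have hchain : ∀ i (hi : i + 1 < u.length), u[i+1] ≠ Letter.inv (u[i]'(by omega)) := by
      intro i hi
      rw [hlen] at hi
      rcases Nat.lt_or_ge (i+1) K with hA | hA
      · rw [F1 (i+1) hA, F1 i (by omega)]
        exact x.2 i
      · rcases Nat.eq_or_lt_of_le hA with hB | hB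
        · rw [getElem_idx u hB.symm, F2, F1 i (by omega)]
          rw [show i = k by omega]
          exact hma
        · rcases Nat.eq_or_lt_of_le (show K ≤ i by omega) with hC | hC
          · rw [F3 (i+1) (by omega) (by omega), getElem_idx u hC.symm, F2]
            rw [show 2*K - (i+1) = k by omega]
            intro hcontra
            have hym : y.1 k = m := by simpa using congrArg Letter.inv hcontra
            exact hmb hym.symm
          · rw [F3 (i+1) (by omega) (by omega), F3 i (by omega) (by omega), linv_inv]
            rw [show 2*K - i = (2*K - (i+1)) + 1 by omega]
            exact Ne.symm (y.2 (2*K - (i+1)))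
    have hcyc : u[0]'hupos ≠ Letter.inv (u[u.length - 1]'(by omega)) := by
      rw [F1 0 (by omega)]
      rw [getElem_idx u (show u.length - 1 = 2*K by omega)]
      rw [F3 (2*K) (by omega) (by omega), linv_inv]
      rw [show 2*K - 2*K = 0 by omega]
      exact hxy
    have hper := isReducedSeq_per u hupos hchain hcyc
    obtain ⟨hch', hcy'⟩ := chain_invRev u hupos hchain hcyc
    have hupos' : 0 < (FreeGroup.invRev u).length := by
      rw [FreeGroup.invRev_length]; omega
    have hper' := isReducedSeq_per _ hupos' hch' hcy'
    refine ⟨⟨per u hupos, hper⟩, ⟨per _ hupos', hper'⟩, ?_, ?_, ?_⟩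
    · intro i hik
      show per u hupos i = x.1 i
      rw [per_eq u hupos (by omega)]
      exact F1 i (by omega)
    · intro i hik
      show per (FreeGroup.invRev u) hupos' i = y.1 i
      rw [per_eq _ hupos' (by rw [FreeGroup.invRev_length]; omega)]
      rw [invRev_getElem u i (by omega)]
      rw [getElem_idx u (show u.length - 1 - i = 2*K - i by omega)]
      rw [F3 (2*K - i) (by omega) (by omega), linv_inv]
      rw [show 2*K - (2*K - i) = i by omega]
    · have hne1 : FreeGroup.mk u ≠ 1 := by
        intro e
        have he := congrArg FreeGroup.toWord e
        rw [FreeGroup.toWord_mk, reduce_eq_self hchain, FreeGroup.toWord_one] at he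
        have hl := congrArg List.length he
        rw [hlen] at hl
        simp at hl
      have hp := plusLimit_per u hupos hper
      have hm : IsPlusLimit (FreeGroup.mk u)⁻¹ ⟨per _ hupos', hper'⟩ := by
        rw [FreeGroup.inv_mk]
        exact plusLimit_per _ hupos' hper'
      have hfe := h 1 (FreeGroup.mk u) hne1 _ _ hp hm
      rwa [boundaryAct_one, boundaryAct_one] at hfe
  choose xp xm h1 h2 h3 using key
  have t1 : Filter.Tendsto (fun k => f (xp k)) Filter.atTop (nhds (f x)) :=
    (hf.tendsto x).comp (tendsto_boundary x xp h1)
  have t2 : Filter.Tendsto (fun k => f (xp k)) Filter.atTop (nhds (f y)) := by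
    have t := (hf.tendsto y).comp (tendsto_boundary y xm h2)
    exact t.congr fun k => (h3 k).symm
  exact tendsto_nhds_unique t1 t2

end AuxProof

/-- A continuous function `f : ∂F_d → ℂ` satisfying
`f(g·w^{+∞}) = f(g·w^{-∞})` for all `g ∈ F_d` and all `w ∈ F_d \ {e}` is
constant. -/
theorem continuous_constant_on_limit_pairs (d : ℕ) (hd : 2 ≤ d)
    (f : Boundary d → ℂ) (hf : Continuous f)
    (h : ∀ (g w : FreeGroup (Fin d)), w ≠ 1 →
      ∀ xp xm : Boundary d, IsPlusLimit w xp → IsPlusLimit w⁻¹ xm →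
        f (boundaryAct g xp) = f (boundaryAct g xm)) :
    ∃ c : ℂ, ∀ x : Boundary d, f x = c := by
  have h0 : (0:ℕ) < d := by omega
  have hcseq : ∀ c : Letter d, IsReducedSeq (fun _ => c) := by
    intro c n
    exact Ne.symm (AuxProof.inv_ne_self c)
  set x0 : Boundary d := ⟨fun _ => ((⟨0, h0⟩ : Fin d), true), hcseq _⟩ with hx0
  refine ⟨f x0, fun x => ?_⟩
  obtain ⟨m, hm1, hm2⟩ := AuxProof.exists_letter hd (x.1 0) (x0.1 0)
  have e1 : f x = f (⟨fun _ => m, hcseq m⟩ : Boundary d) :=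
    AuxProof.step hd f hf h x _ (Ne.symm hm1)
  have e2 : f (⟨fun _ => m, hcseq m⟩ : Boundary d) = f x0 :=
    AuxProof.step hd f hf h _ x0 hm2
  rw [e1, e2]
end

section
/- For every s ∈ S and every g ∈ F_d, the function x ↦ q[s](g^{-1}·x) on ∂F_d is constant on each equivalence class of R_S; moreover this family separates the classes of R_S: for any x, y ∈ ∂F_d with (x, y) ∉ R_S, there exist g ∈ F_d and s ∈ S such that q[s](g^{-1}·x) ≠ q[s](g^{-1}·y). -/
/-! ### Auxiliary development -/

section Aux

open List

variable {d : ℕ}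

@[simp] lemma Letter.inv_inv (a : Letter d) : a.inv.inv = a := by
  cases a; simp [Letter.inv]

lemma Letter.inv_ne (a : Letter d) : a.inv ≠ a := by
  rcases a with ⟨i, b⟩
  simp [Letter.inv]

@[simp] lemma Letter.inv_fst (a : Letter d) : a.inv.1 = a.1 := rfl

lemma Letter.eq_inv_swap {a b : Letter d} : a = b.inv ↔ b = a.inv := by
  constructor <;> rintro rfl <;> simp

lemma Letter.mul_cond_iff {a b : Letter d} : (a.1 = b.1 ∧ a.2 = !b.2) ↔ b = Letter.inv a := by
  rcases a with ⟨i, s⟩; rcases b with ⟨j, t⟩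
  simp only [Letter.inv, Prod.mk.injEq]
  constructor
  · rintro ⟨rfl, rfl⟩; simp
  · rintro ⟨rfl, rfl⟩; simp

/-- A finite word is reduced. -/
def LReduced (l : List (Letter d)) : Prop := List.Chain' (fun a b => b ≠ Letter.inv a) l

lemma reduce_eq_self {l : List (Letter d)} (h : LReduced l) : FreeGroup.reduce l = l := by
  induction l with
  | nil => rfl
  | cons a l ih =>
    have hl : LReduced l := List.IsChain.tail h
    rw [FreeGroup.reduce.cons, ih hl]
    cases l with
    | nil => rfl
    | cons b t =>
      have hb : b ≠ a.inv := (List.isChain_cons_cons.mp h).1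
      simp only [if_neg (fun hc => hb (Letter.mul_cond_iff.mp hc))]

lemma lreduced_reduce (l : List (Letter d)) : LReduced (FreeGroup.reduce l) := by
  induction l with
  | nil => exact List.isChain_nil
  | cons a l ih =>
    rw [FreeGroup.reduce.cons]
    rcases hr : FreeGroup.reduce l with _ | ⟨b, t⟩
    · exact List.isChain_singleton a
    · rw [hr] at ih
      by_cases hc : a.1 = b.1 ∧ a.2 = !b.2
      · simp only [if_pos hc]
        exact List.IsChain.tail ih
      · simp only [if_neg hc]
        exact List.isChain_cons_cons.mpr ⟨fun hb => hc (Letter.mul_cond_iff.mpr hb), ih⟩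

lemma lreduced_toWord (g : FreeGroup (Fin d)) : LReduced g.toWord := by
  rw [← FreeGroup.reduce_toWord]; exact lreduced_reduce _

/-! ### `cancelLen` -/

lemma cancelLen_le (u : List (Letter d)) (x : ℕ → Letter d) : cancelLen u x ≤ u.length :=
  Nat.findGreatest_le _

lemma cancelLen_spec (u : List (Letter d)) (x : ℕ → Letter d) :
    ∀ i < cancelLen u x, u[u.length - 1 - i]? = some (Letter.inv (x i)) := by
  classical
  have h := (Nat.findGreatest_eq_iff.mp
    (rfl : Nat.findGreatest (fun k => ∀ i < k, u[u.length - 1 - i]? = some (Letter.inv (x i)))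
      u.length = cancelLen u x)).2.1
  intro i hi
  have hne : cancelLen u x ≠ 0 := by omega
  exact h hne i hi

lemma cancelLen_max {u : List (Letter d)} {x : ℕ → Letter d} (h : cancelLen u x < u.length) :
    ¬ u[u.length - 1 - cancelLen u x]? = some (Letter.inv (x (cancelLen u x))) := by
  classical
  intro hc
  have hg := Nat.findGreatest_is_greatest
    (P := fun k => ∀ i < k, u[u.length - 1 - i]? = some (Letter.inv (x i)))
    (Nat.lt_succ_self (cancelLen u x)) (by omega)
  apply hg
  intro i hi
  rcases Nat.lt_or_ge i (cancelLen u x) with h' | h'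
  · exact cancelLen_spec u x i h'
  · have : i = cancelLen u x := by omega
    rw [this]; exact hc

lemma cancelLen_eq {u : List (Letter d)} {x : ℕ → Letter d} {k : ℕ} (hk : k ≤ u.length)
    (hP : ∀ i < k, u[u.length - 1 - i]? = some (Letter.inv (x i)))
    (hmax : k = u.length ∨ ¬ u[u.length - 1 - k]? = some (Letter.inv (x k))) :
    cancelLen u x = k := by
  classical
  apply Nat.findGreatest_eq_iff.mpr
  refine ⟨hk, fun _ => hP, ?_⟩
  intro n hn hnle hPn
  rcases hmax with h | h
  · omega
  · exact h (hPn k hn)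

/-! ### `extSeq` -/

/-- Extension of a finite word by an infinite word. -/
def extSeq (l : List (Letter d)) (y : ℕ → Letter d) : ℕ → Letter d :=
  fun n => if h : n < l.length then l[n] else y (n - l.length)

lemma extSeq_nil (y : ℕ → Letter d) (n : ℕ) : extSeq [] y n = y n := by
  simp [extSeq]

lemma extSeq_lt {l : List (Letter d)} {y : ℕ → Letter d} {n : ℕ} (h : n < l.length) :
    extSeq l y n = l[n] := dif_pos h

lemma extSeq_ge {l : List (Letter d)} {y : ℕ → Letter d} {n : ℕ} (h : l.length ≤ n) :
    extSeq l y n = y (n - l.length) := dif_neg (by omega)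

@[simp] lemma extSeq_cons_zero (a : Letter d) (l : List (Letter d)) (y : ℕ → Letter d) :
    extSeq (a :: l) y 0 = a := by simp [extSeq]

@[simp] lemma extSeq_cons_succ (a : Letter d) (l : List (Letter d)) (y : ℕ → Letter d) (n : ℕ) :
    extSeq (a :: l) y (n + 1) = extSeq l y n := by
  unfold extSeq
  by_cases h : n < l.length
  · rw [dif_pos (by simpa using Nat.succ_lt_succ h), dif_pos h]
    simp
  · rw [dif_neg (by simp; omega), dif_neg h]
    simp

lemma length_invRev (l : List (Letter d)) : (FreeGroup.invRev l).length = l.length :=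
  FreeGroup.invRev_length

lemma getElem_invRev (l : List (Letter d)) (i : ℕ) (h : i < l.length) :
    (FreeGroup.invRev l)[i]'(by rw [length_invRev]; exact h) =
      Letter.inv (l[l.length - 1 - i]'(by omega)) := by
  simp [FreeGroup.invRev, List.getElem_reverse, List.getElem_map, Letter.inv]

/-! ### characterization of `concatReduce` -/

lemma concatReduce_char {v r : List (Letter d)} {x y : ℕ → Letter d}
    (hx : ∀ n, x n = extSeq (FreeGroup.invRev r) y n)
    (hJ : ∀ c, v.getLast? = some c → c ≠ Letter.inv (y 0)) :
    cancelLen (v ++ r) x = r.length ∧ ∀ n, concatReduce (v ++ r) x n = extSeq v y n := by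
  have hlen : (v ++ r).length = v.length + r.length := by simp
  have hP : ∀ i < r.length, (v ++ r)[(v ++ r).length - 1 - i]? = some (Letter.inv (x i)) := by
    intro i hi
    have hidx : (v ++ r).length - 1 - i = v.length + (r.length - 1 - i) := by omega
    rw [hidx]
    rw [List.getElem?_append_right (by omega)]
    have hir : v.length + (r.length - 1 - i) - v.length = r.length - 1 - i := by omega
    rw [hir]
    have hxi : x i = Letter.inv (r[r.length - 1 - i]'(by omega)) := by
      rw [hx i, extSeq_lt (by rw [length_invRev]; exact hi)]
      exact getElem_invRev r i hi
    rw [hxi, Letter.inv_inv]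
    exact List.getElem?_eq_getElem (by omega)
  have hcl : cancelLen (v ++ r) x = r.length := by
    apply cancelLen_eq (by omega) hP
    rcases v with _ | ⟨a, v'⟩
    · left; simp
    · right
      set w := a :: v'
      have hw : 0 < w.length := by simp [w]
      have hidx : (w ++ r).length - 1 - r.length = w.length - 1 := by
        simp only [List.length_append]; omega
      rw [hidx, List.getElem?_append_left (by omega), List.getElem?_eq_getElem (by omega)]
      have hxr : x r.length = y 0 := by
        rw [hx, extSeq_ge (by rw [length_invRev])]
        simp [length_invRev]
      rw [hxr]
      intro hc
      have hlast : w.getLast? = some (w[w.length - 1]'(by omega)) := by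
        rw [List.getLast?_eq_getElem?]
        exact List.getElem?_eq_getElem (by omega)
      exact hJ _ hlast (Option.some.inj hc)
  refine ⟨hcl, ?_⟩
  intro n
  rw [concatReduce]
  simp only [hcl]
  have hm : (v ++ r).length - r.length = v.length := by omega
  by_cases h : n < v.length
  · rw [dif_pos (by omega : n < (v ++ r).length - r.length)]
    rw [extSeq_lt h]
    exact List.getElem_append_left h
  · rw [dif_neg (by omega : ¬ n < (v ++ r).length - r.length)]
    rw [extSeq_ge (by omega)]
    rw [hx, extSeq_ge (by rw [length_invRev]; omega)]
    congr 1
    rw [length_invRev, hm]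
    omega

lemma concatReduce_extSeq (u : List (Letter d)) (x : ℕ → Letter d) (k : ℕ)
    (hk : cancelLen u x = k) (n : ℕ) :
    concatReduce u x n = extSeq (u.take (u.length - k)) (fun j => x (k + j)) n := by
  have hkle : k ≤ u.length := hk ▸ cancelLen_le u x
  rw [concatReduce]
  simp only [hk]
  by_cases h : n < u.length - k
  · rw [dif_pos h, extSeq_lt (by rw [List.length_take]; omega)]
    rw [List.getElem_take]
  · rw [dif_neg h, extSeq_ge (by rw [List.length_take]; omega)]
    rw [List.length_take]
    congr 1
    omega

lemma isReducedSeq_shift {x : ℕ → Letter d} (hx : IsReducedSeq x) (k : ℕ) :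
    IsReducedSeq (fun j => x (k + j)) := by
  intro n
  show x (k + (n + 1)) ≠ (x (k + n)).inv
  have : k + (n + 1) = (k + n) + 1 := by omega
  rw [this]
  exact hx (k + n)

lemma isReducedSeq_extSeq {v : List (Letter d)} {y : ℕ → Letter d} (hv : LReduced v)
    (hy : IsReducedSeq y) (hJ : ∀ c, v.getLast? = some c → y 0 ≠ Letter.inv c) :
    IsReducedSeq (extSeq v y) := by
  intro n
  rcases lt_trichotomy (n + 1) v.length with h | h | h
  · rw [extSeq_lt h, extSeq_lt (by omega)]
    have := List.isChain_iff_getElem.mp hv n (by omega)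
    simpa using this
  · rw [extSeq_ge (by omega), extSeq_lt (by omega)]
    have h0 : n + 1 - v.length = 0 := by omega
    rw [h0]
    have hlast : v.getLast? = some (v[n]'(by omega)) := by
      rw [List.getLast?_eq_getElem?]
      have : v.length - 1 = n := by omega
      rw [this]
      exact List.getElem?_eq_getElem (by omega)
    exact hJ _ hlast
  · rw [extSeq_ge (by omega), extSeq_ge (by omega)]
    have h1 : n + 1 - v.length = (n - v.length) + 1 := by omega
    rw [h1]
    exact hy _

lemma concatReduce_reduced {u : List (Letter d)} {x : ℕ → Letter d} (hu : LReduced u)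
    (hx : IsReducedSeq x) : IsReducedSeq (concatReduce u x) := by
  set k := cancelLen u x with hk
  have heq : concatReduce u x = extSeq (u.take (u.length - k)) (fun j => x (k + j)) :=
    funext (concatReduce_extSeq u x k rfl)
  rw [heq]
  apply isReducedSeq_extSeq (List.IsChain.take hu _) (isReducedSeq_shift hx k)
  intro c hc
  have hne : u.take (u.length - k) ≠ [] := by
    intro hnil
    rw [hnil] at hc
    simp at hc
  have hlpos : 0 < (u.take (u.length - k)).length := List.length_pos_iff.mpr hne
  rw [List.length_take] at hlpos
  have hklt : k < u.length := by omega
  have hmax := cancelLen_max (u := u) (x := x) (by rw [← hk]; exact hklt)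
  rw [← hk] at hmax
  have hceq : c = u[u.length - 1 - k]'(by omega) := by
    have hlast : (u.take (u.length - k)).getLast? =
        some ((u.take (u.length - k))[(u.take (u.length - k)).length - 1]'(by
          simp [List.length_take]; omega)) := by
      rw [List.getLast?_eq_getElem?]
      exact List.getElem?_eq_getElem (by simp [List.length_take]; omega)
    rw [hlast] at hc
    have := Option.some.inj hc
    rw [← this]
    rw [List.getElem_take]
    congr 1
    simp [List.length_take]
    omega
  rw [hceq]
  intro hcon
  rw [Nat.add_zero] at hcon
  apply hmax
  rw [List.getElem?_eq_getElem (by omega), Letter.eq_inv_swap.mp hcon]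

lemma boundaryAct_coe (g : FreeGroup (Fin d)) (x : Boundary d) :
    (boundaryAct g x).1 = concatReduce g.toWord x.1 := by
  rw [boundaryAct, dif_pos (concatReduce_reduced (lreduced_toWord g) x.2)]

lemma concatReduce_nil (x : ℕ → Letter d) (n : ℕ) : concatReduce [] x n = x n := by
  have h0 : cancelLen ([] : List (Letter d)) x = 0 := by
    apply cancelLen_eq (by simp) (by intro i hi; omega) (Or.inl (by simp))
  rw [concatReduce_extSeq _ x 0 h0]
  simp [extSeq]

end Aux


section Aux2

open List

variable {d : ℕ}

lemma concatReduce_cons {a : Letter d} {l : List (Letter d)} {x : ℕ → Letter d}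
    (hl : LReduced (a :: l)) (n : ℕ) :
    concatReduce (a :: l) x n = concatReduce [a] (concatReduce l x) n := by
  set k := cancelLen l x with hkdef
  have hkle : k ≤ l.length := cancelLen_le l x
  rcases Nat.lt_or_ge k l.length with hk | hk
  · -- partial cancellation inside `l`
    have hl0 : 0 < l.length := by omega
    have hhead : l[0]'hl0 ≠ a.inv := by
      have := List.isChain_iff_getElem.mp hl 0 (by simp; omega)
      simpa using this
    have hca : cancelLen (a :: l) x = k := by
      apply cancelLen_eq (by simp; omega)
      · intro i hi
        have hidx : (a :: l).length - 1 - i = (l.length - 1 - i) + 1 := by simp; omega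
        rw [hidx, List.getElem?_cons_succ]
        exact cancelLen_spec l x i hi
      · right
        have hidx : (a :: l).length - 1 - k = (l.length - 1 - k) + 1 := by simp; omega
        rw [hidx, List.getElem?_cons_succ]
        exact cancelLen_max hk
    have hz : ∀ m, concatReduce l x m =
        extSeq (l.take (l.length - k)) (fun j => x (k + j)) m :=
      concatReduce_extSeq l x k rfl
    have hz0 : concatReduce l x 0 = l[0]'hl0 := by
      rw [hz 0, extSeq_lt (by rw [List.length_take]; omega), List.getElem_take]
    have hc0 : cancelLen [a] (concatReduce l x) = 0 := by
      apply cancelLen_eq (by simp) (by intro i hi; omega)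
      right
      simp only [List.length_singleton, Nat.sub_self, Nat.zero_sub]
      rw [List.getElem?_eq_getElem (by simp), hz0]
      simp only [List.getElem_singleton]
      intro hcon
      exact hhead (Letter.eq_inv_swap.mp (Option.some.inj hcon))
    rw [concatReduce_extSeq (a :: l) x k hca n, concatReduce_extSeq [a] _ 0 hc0 n]
    have ht1 : (a :: l).length - k = (l.length - k) + 1 := by simp; omega
    rw [ht1, List.take_succ_cons]
    have ht2 : [a].take ([a].length - 0) = [a] := by simp
    rw [ht2]
    cases n with
    | zero => simp
    | succ n =>
      rw [extSeq_cons_succ]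
      show extSeq (l.take (l.length - k)) (fun j => x (k + j)) n = extSeq [a] _ (n + 1)
      have : ([a] : List (Letter d)) = a :: [] := rfl
      rw [this, extSeq_cons_succ, extSeq_nil]
      rw [Nat.zero_add, hz n]
  · -- full cancellation of `l`
    have hk2 : k = l.length := by omega
    have hz : ∀ m, concatReduce l x m = x (k + m) := by
      intro m
      rw [concatReduce_extSeq l x k rfl]
      rw [hk2, Nat.sub_self, List.take_zero, extSeq_nil]
    by_cases hB : a = Letter.inv (x k)
    · -- the extra letter also cancels
      have hca : cancelLen (a :: l) x = k + 1 := by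
        apply cancelLen_eq (by simp; omega)
        · intro i hi
          rcases Nat.lt_or_ge i k with h' | h'
          · have hidx : (a :: l).length - 1 - i = (l.length - 1 - i) + 1 := by simp; omega
            rw [hidx, List.getElem?_cons_succ]
            exact cancelLen_spec l x i h'
          · have hik : i = k := by omega
            have hidx : (a :: l).length - 1 - i = 0 := by simp; omega
            rw [hidx, hik, List.getElem?_cons_zero]
            rw [hB]
        · left; simp; omega
      have hc1 : cancelLen [a] (concatReduce l x) = 1 := by
        apply cancelLen_eq (by simp)
        · intro i hi
          have hi0 : i = 0 := by omega
          subst hi0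
          simp only [List.length_singleton, Nat.sub_self, Nat.zero_sub]
          rw [List.getElem?_eq_getElem (by simp)]
          simp only [List.getElem_singleton]
          rw [hz 0, Nat.add_zero, hB]
        · left; simp
      rw [concatReduce_extSeq (a :: l) x (k + 1) hca n, concatReduce_extSeq [a] _ 1 hc1 n]
      have ht1 : (a :: l).length - (k + 1) = 0 := by simp; omega
      have ht2 : [a].length - 1 = 0 := by simp
      rw [ht1, ht2, List.take_zero, List.take_zero, extSeq_nil, extSeq_nil]
      rw [hz]
      congr 1
      omega
    · -- no further cancellation
      have hca : cancelLen (a :: l) x = k := by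
        apply cancelLen_eq (by simp; omega)
        · intro i hi
          have hidx : (a :: l).length - 1 - i = (l.length - 1 - i) + 1 := by simp; omega
          rw [hidx, List.getElem?_cons_succ]
          exact cancelLen_spec l x i hi
        · right
          have hidx : (a :: l).length - 1 - k = 0 := by simp; omega
          rw [hidx, List.getElem?_cons_zero]
          intro hcon
          exact hB (Option.some.inj hcon)
      have hc0 : cancelLen [a] (concatReduce l x) = 0 := by
        apply cancelLen_eq (by simp) (by intro i hi; omega)
        right
        simp only [List.length_singleton, Nat.sub_self, Nat.zero_sub]
        rw [List.getElem?_eq_getElem (by simp)]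
        simp only [List.getElem_singleton]
        rw [hz 0, Nat.add_zero]
        intro hcon
        exact hB (Option.some.inj hcon)
      rw [concatReduce_extSeq (a :: l) x k hca n, concatReduce_extSeq [a] _ 0 hc0 n]
      have ht1 : (a :: l).length - k = 1 := by simp; omega
      have ht2 : [a].length - 0 = 1 := by simp
      rw [ht1, ht2]
      have ht3 : (a :: l).take 1 = [a] := by simp
      have ht4 : [a].take 1 = [a] := by simp
      rw [ht3, ht4]
      cases n with
      | zero => simp
      | succ n =>
        have : ([a] : List (Letter d)) = a :: [] := rfl
        rw [this, extSeq_cons_succ, extSeq_cons_succ, extSeq_nil, extSeq_nil]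
        rw [Nat.zero_add, hz n]

lemma concatReduce_cancel {a : Letter d} {t : List (Letter d)} {x : ℕ → Letter d}
    (ht : LReduced (Letter.inv a :: t)) (hx : IsReducedSeq x) (n : ℕ) :
    concatReduce t x n = concatReduce [a] (concatReduce (Letter.inv a :: t) x) n := by
  set b := Letter.inv a with hbdef
  set k := cancelLen (b :: t) x with hkdef
  have hkle : k ≤ t.length + 1 := by
    have := cancelLen_le (b :: t) x
    simpa using this
  rcases Nat.lt_or_ge k (t.length + 1) with h1 | h2
  · -- k ≤ t.length
    have h1' : k ≤ t.length := by omega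
    have hkt : cancelLen t x = k := by
      apply cancelLen_eq h1'
      · intro i hi
        have hspec := cancelLen_spec (b :: t) x i (by omega)
        have hidx : (b :: t).length - 1 - i = (t.length - 1 - i) + 1 := by simp; omega
        rw [hidx, List.getElem?_cons_succ] at hspec
        exact hspec
      · rcases Nat.lt_or_ge k t.length with h' | h'
        · right
          have hmax := cancelLen_max (u := b :: t) (x := x) (by simp; omega)
          have hidx : (b :: t).length - 1 - k = (t.length - 1 - k) + 1 := by simp; omega
          rw [hidx, List.getElem?_cons_succ] at hmax
          exact hmax
        · left; omega
    have hz : ∀ m, concatReduce (b :: t) x m =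
        extSeq (b :: t.take (t.length - k)) (fun j => x (k + j)) m := by
      intro m
      have := concatReduce_extSeq (b :: t) x k rfl m
      rw [this]
      have hidx : (b :: t).length - k = (t.length - k) + 1 := by simp; omega
      rw [hidx, List.take_succ_cons]
    have hz0 : concatReduce (b :: t) x 0 = b := by rw [hz 0, extSeq_cons_zero]
    have hc1 : cancelLen [a] (concatReduce (b :: t) x) = 1 := by
      apply cancelLen_eq (by simp)
      · intro i hi
        have hi0 : i = 0 := by omega
        subst hi0
        simp only [List.length_singleton, Nat.sub_self, Nat.zero_sub]
        rw [List.getElem?_eq_getElem (by simp)]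
        simp only [List.getElem_singleton]
        rw [hz0, hbdef, Letter.inv_inv]
      · left; simp
    rw [concatReduce_extSeq [a] _ 1 hc1 n]
    have ht2 : [a].length - 1 = 0 := by simp
    rw [ht2, List.take_zero, extSeq_nil]
    rw [hz (1 + n)]
    have h1n : 1 + n = n + 1 := by omega
    rw [h1n, extSeq_cons_succ]
    rw [concatReduce_extSeq t x k hkt n]
  · -- full cancellation
    have hk2 : k = t.length + 1 := by omega
    have hxt : x t.length = a := by
      have hspec := cancelLen_spec (b :: t) x t.length (by omega)
      have hidx : (b :: t).length - 1 - t.length = 0 := by simp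
      rw [hidx, List.getElem?_cons_zero] at hspec
      have hb : b = (x t.length).inv := Option.some.inj hspec
      have := Letter.eq_inv_swap.mp hb
      rw [this, hbdef, Letter.inv_inv]
    have hkt : cancelLen t x = t.length := by
      apply cancelLen_eq le_rfl
      · intro i hi
        have hspec := cancelLen_spec (b :: t) x i (by omega)
        have hidx : (b :: t).length - 1 - i = (t.length - 1 - i) + 1 := by simp; omega
        rw [hidx, List.getElem?_cons_succ] at hspec
        exact hspec
      · left; rfl
    have hz : ∀ m, concatReduce (b :: t) x m = x (t.length + 1 + m) := by
      intro m
      rw [concatReduce_extSeq (b :: t) x k rfl m]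
      have hidx : (b :: t).length - k = 0 := by simp; omega
      rw [hidx, List.take_zero, extSeq_nil]
      congr 1
      omega
    have hLHS : ∀ m, concatReduce t x m = x (t.length + m) := by
      intro m
      rw [concatReduce_extSeq t x t.length hkt m]
      rw [Nat.sub_self, List.take_zero, extSeq_nil]
    have hc0 : cancelLen [a] (concatReduce (b :: t) x) = 0 := by
      apply cancelLen_eq (by simp) (by intro i hi; omega)
      right
      simp only [List.length_singleton, Nat.sub_self, Nat.zero_sub]
      rw [List.getElem?_eq_getElem (by simp)]
      simp only [List.getElem_singleton]
      rw [hz 0, Nat.add_zero]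
      intro hcon
      have ha : x (t.length + 1) = a.inv :=
        Letter.eq_inv_swap.mp (Option.some.inj hcon)
      have := hx t.length
      rw [hxt] at this
      exact this ha
    rw [concatReduce_extSeq [a] _ 0 hc0 n]
    have ht2 : [a].take ([a].length - 0) = [a] := by simp
    rw [ht2]
    cases n with
    | zero =>
      rw [extSeq_cons_zero, hLHS 0, Nat.add_zero, hxt]
    | succ n =>
      have : ([a] : List (Letter d)) = a :: [] := rfl
      rw [this, extSeq_cons_succ, extSeq_nil]
      rw [Nat.zero_add, hz n, hLHS (n + 1)]
      congr 1
      omega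

lemma boundaryAct_one (x : Boundary d) : boundaryAct (1 : FreeGroup (Fin d)) x = x := by
  apply Subtype.ext
  rw [boundaryAct_coe, FreeGroup.toWord_one]
  funext n
  exact concatReduce_nil x.1 n

lemma reduce_cons_of_reduced {a b : Letter d} {t : List (Letter d)}
    (h : FreeGroup.reduce (b :: t) = b :: t) :
    FreeGroup.reduce (a :: b :: t) = if a.1 = b.1 ∧ a.2 = !b.2 then t else a :: b :: t := by
  rw [FreeGroup.reduce.cons, h]

lemma boundaryAct_single_mul (a : Letter d) (k : FreeGroup (Fin d)) (x : Boundary d) :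
    boundaryAct (FreeGroup.mk [a] * k) x = boundaryAct (FreeGroup.mk [a]) (boundaryAct k x) := by
  apply Subtype.ext
  rw [boundaryAct_coe, boundaryAct_coe, boundaryAct_coe]
  have htw1 : (FreeGroup.mk [a] : FreeGroup (Fin d)).toWord = [a] := by
    rw [FreeGroup.toWord_mk, FreeGroup.reduce_singleton]
  have hmul : FreeGroup.mk [a] * k = FreeGroup.mk (a :: k.toWord) := by
    conv_lhs => rw [← FreeGroup.mk_toWord (x := k)]
    rw [FreeGroup.mul_mk, List.singleton_append]
  rw [hmul, FreeGroup.toWord_mk, htw1]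
  rcases hw : k.toWord with _ | ⟨b, t⟩
  · rw [FreeGroup.reduce_singleton]
    have hnil : concatReduce ([] : List (Letter d)) x.1 = x.1 := funext (concatReduce_nil x.1)
    rw [hnil]
  · have hred : FreeGroup.reduce (b :: t) = b :: t := by rw [← hw, FreeGroup.reduce_toWord]
    have hbt : LReduced (b :: t) := by rw [← hw]; exact lreduced_toWord k
    rw [reduce_cons_of_reduced hred]
    by_cases hc : a.1 = b.1 ∧ a.2 = !b.2
    · have hb : b = Letter.inv a := Letter.mul_cond_iff.mp hc
      rw [if_pos hc]
      subst hb
      funext n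
      exact concatReduce_cancel hbt x.2 n
    · rw [if_neg hc]
      have hred2 : LReduced (a :: b :: t) :=
        List.isChain_cons_cons.mpr ⟨fun h => hc (Letter.mul_cond_iff.mpr h), hbt⟩
      funext n
      exact concatReduce_cons hred2 n

lemma boundaryAct_mk_mul (l : List (Letter d)) (hl : LReduced l) :
    ∀ (h : FreeGroup (Fin d)) (x : Boundary d),
      boundaryAct (FreeGroup.mk l * h) x = boundaryAct (FreeGroup.mk l) (boundaryAct h x) := by
  induction l with
  | nil =>
    intro h x
    have h1 : FreeGroup.mk ([] : List (Letter d)) = 1 := FreeGroup.one_eq_mk.symm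
    rw [h1, one_mul, boundaryAct_one]
  | cons a l ih =>
    intro h x
    have hsplit : FreeGroup.mk (a :: l) = FreeGroup.mk [a] * FreeGroup.mk l := by
      rw [FreeGroup.mul_mk, List.singleton_append]
    rw [hsplit, mul_assoc, boundaryAct_single_mul a (FreeGroup.mk l * h) x,
      ih hl.tail h x, ← boundaryAct_single_mul a (FreeGroup.mk l) (boundaryAct h x)]

lemma boundaryAct_mul (g h : FreeGroup (Fin d)) (x : Boundary d) :
    boundaryAct (g * h) x = boundaryAct g (boundaryAct h x) := by
  conv_lhs => rw [← FreeGroup.mk_toWord (x := g)]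
  conv_rhs => rw [← FreeGroup.mk_toWord (x := g)]
  exact boundaryAct_mk_mul g.toWord (lreduced_toWord g) h x

end Aux2


section Aux3

open List

variable {d : ℕ}

lemma pFun_eq_single {w : FreeGroup (Fin d)} {a : Letter d} (hw : w.toWord = [a])
    (x : Boundary d) : pFun w x = if x.1 0 = a then 1 else 0 := by
  rw [pFun, hw]
  by_cases h : x.1 0 = a
  · rw [if_pos h, if_pos]
    intro i hi
    have hi0 : i = 0 := by simpa using hi
    subst hi0
    rw [h]
    simp
  · rw [if_neg h, if_neg]
    intro hc
    apply h
    have := hc 0 (by simp)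
    simp at this
    exact this.symm

lemma qFun_eq (s : Fin d) (x : Boundary d) :
    qFun s x = if (x.1 0).1 = s then 1 else 0 := by
  have h1 : (FreeGroup.of s).toWord = [((s, true) : Letter d)] := FreeGroup.toWord_of s
  have h2 : (FreeGroup.of s)⁻¹.toWord = [((s, false) : Letter d)] := by
    rw [FreeGroup.toWord_inv, FreeGroup.toWord_of]
    simp [FreeGroup.invRev]
  show pFun (FreeGroup.of s) x + pFun (FreeGroup.of s)⁻¹ x = _
  rw [pFun_eq_single h1 x, pFun_eq_single h2 x]
  rcases h0 : x.1 0 with ⟨c, bb⟩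
  by_cases hcs : c = s
  · subst hcs
    cases bb <;> simp [Prod.ext_iff]
  · simp [Prod.ext_iff, hcs]

/-- The constant boundary point. -/
def constB (a : Letter d) : Boundary d :=
  ⟨fun _ => a, fun _ h => Letter.inv_ne a h.symm⟩

@[simp] lemma constB_coe (a : Letter d) : (constB a).1 = fun _ => a := rfl

lemma mk_single_inv (a : Letter d) :
    (FreeGroup.mk [a] : FreeGroup (Fin d))⁻¹ = FreeGroup.mk [a.inv] := by
  rw [FreeGroup.inv_mk]
  congr 1

lemma toWord_mk_single_pow (a : Letter d) (n : ℕ) :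
    ((FreeGroup.mk [a] : FreeGroup (Fin d)) ^ n).toWord = List.replicate n a := by
  induction n with
  | zero => simp [FreeGroup.toWord_one]
  | succ n ih =>
    have hmk : (FreeGroup.mk [a] : FreeGroup (Fin d)) ^ n = FreeGroup.mk (List.replicate n a) := by
      rw [← FreeGroup.mk_toWord (x := (FreeGroup.mk [a] : FreeGroup (Fin d)) ^ n), ih]
    rw [pow_succ, hmk, FreeGroup.mul_mk, ← List.replicate_succ', FreeGroup.toWord_mk,
      FreeGroup.reduce_replicate]

lemma isPlusLimit_const_mk (a : Letter d) : IsPlusLimit (FreeGroup.mk [a]) (constB a) := by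
  intro k
  refine ⟨k, fun n hn => ?_⟩
  rw [toWord_mk_single_pow]
  refine ⟨by simpa using hn, fun i hi => ?_⟩
  rw [List.getElem?_replicate, if_pos (by omega)]
  rfl

lemma eq_const_of_isPlusLimit (a : Letter d) (x : Boundary d)
    (h : IsPlusLimit (FreeGroup.mk [a]) x) : x = constB a := by
  apply Subtype.ext
  funext i
  obtain ⟨N, hN⟩ := h (i + 1)
  obtain ⟨hlen, hval⟩ := hN (max N (i + 1)) (le_max_left _ _)
  have hv := hval i (by omega)
  rw [toWord_mk_single_pow] at hv
  have him : i < max N (i + 1) := by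
    have := le_max_right N (i + 1)
    omega
  rw [List.getElem?_replicate, if_pos him] at hv
  exact (Option.some.inj hv).symm

lemma fst_concatReduce_const (u : List (Letter d)) (a : Letter d) :
    (concatReduce u (fun _ => a) 0).1 = (concatReduce u (fun _ => a.inv) 0).1 := by
  have hkle : cancelLen u (fun _ => a) ≤ u.length := cancelLen_le _ _
  have hk'le : cancelLen u (fun _ => a.inv) ≤ u.length := cancelLen_le _ _
  have hfull : ∀ (b : Letter d), cancelLen u (fun _ => b) = u.length →
      ∀ j, (hj : j < u.length) → u[j] = b.inv := by
    intro b hb j hj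
    have hsp := cancelLen_spec u (fun _ => b) (u.length - 1 - j) (by omega)
    have hidx : u.length - 1 - (u.length - 1 - j) = j := by omega
    rw [hidx, List.getElem?_eq_getElem hj] at hsp
    exact Option.some.inj hsp
  have heval : ∀ (b : Letter d), concatReduce u (fun _ => b) 0 =
      if h : 0 < u.length - cancelLen u (fun _ => b) then u[0]'(by omega) else b := by
    intro b
    rfl
  rw [heval a, heval a.inv]
  rcases Nat.lt_or_ge (cancelLen u (fun _ => a)) u.length with hk | hk <;>
    rcases Nat.lt_or_ge (cancelLen u (fun _ => a.inv)) u.length with hk' | hk'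
  · rw [dif_pos (by omega), dif_pos (by omega)]
  · have hL : 0 < u.length := by omega
    have hu0 : ∀ (hh : 0 < u.length), u[0]'hh = a := by
      intro hh
      have := hfull a.inv (by omega) 0 hL
      rw [this, Letter.inv_inv]
    rw [dif_pos (by omega), dif_neg (by omega), hu0]
    rfl
  · have hL : 0 < u.length := by omega
    have hu0 : ∀ (hh : 0 < u.length), u[0]'hh = a.inv := fun hh => hfull a (by omega) 0 hL
    rw [dif_neg (by omega), dif_pos (by omega), hu0]
    rfl
  · rcases Nat.eq_zero_or_pos u.length with hL | hL
    · rw [dif_neg (by omega), dif_neg (by omega)]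
      rfl
    · exfalso
      have h1 := hfull a (by omega) 0 hL
      have h2 := hfull a.inv (by omega) 0 hL
      rw [Letter.inv_inv] at h2
      rw [h2] at h1
      exact Letter.inv_ne a h1.symm

lemma qFun_boundaryAct_const (s : Fin d) (h : FreeGroup (Fin d)) (a : Letter d) :
    qFun s (boundaryAct h (constB a)) = qFun s (boundaryAct h (constB a.inv)) := by
  rw [qFun_eq, qFun_eq, boundaryAct_coe, boundaryAct_coe, constB_coe, constB_coe,
    fst_concatReduce_const h.toWord a]

/-! ### prefix lemmas for separation -/

lemma prefix_reduced (x : Boundary d) (n : ℕ) :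
    LReduced (List.ofFn fun i : Fin n => x.1 i) := by
  unfold LReduced List.Chain'
  rw [List.isChain_iff_getElem]
  intro i hi
  simp only [List.length_ofFn] at hi
  simp only [List.get_eq_getElem, List.getElem_ofFn]
  exact x.2 i

lemma toWord_mk_inv_of_reduced {p : List (Letter d)} (hp : LReduced p) :
    (FreeGroup.mk p)⁻¹.toWord = FreeGroup.invRev p := by
  rw [FreeGroup.toWord_inv, FreeGroup.toWord_mk, reduce_eq_self hp]

lemma extSeq_ofFn_prefix (x y : Boundary d) (n : ℕ) (hpre : ∀ i < n, y.1 i = x.1 i) (m : ℕ) :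
    y.1 m = extSeq (List.ofFn fun i : Fin n => x.1 i) (fun j => y.1 (n + j)) m := by
  rcases Nat.lt_or_ge m n with hm | hm
  · rw [extSeq_lt (by simp; omega), List.getElem_ofFn]
    exact hpre m hm
  · rw [extSeq_ge (by simp; omega)]
    simp only [List.length_ofFn]
    show y.1 m = y.1 (n + (m - n))
    rw [Nat.add_sub_cancel' hm]

lemma boundaryAct_prefix_inv (x y : Boundary d) (n : ℕ) (hpre : ∀ i < n, y.1 i = x.1 i) :
    (boundaryAct (FreeGroup.mk (List.ofFn fun i : Fin n => x.1 i))⁻¹ y).1 =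
      fun j => y.1 (n + j) := by
  rw [boundaryAct_coe, toWord_mk_inv_of_reduced (prefix_reduced x n)]
  have hx' : ∀ m, y.1 m =
      extSeq (FreeGroup.invRev (FreeGroup.invRev (List.ofFn fun i : Fin n => x.1 i)))
        (fun j => y.1 (n + j)) m := by
    intro m
    rw [FreeGroup.invRev_invRev]
    exact extSeq_ofFn_prefix x y n hpre m
  have hJ' : ∀ c, (([] : List (Letter d))).getLast? = some c →
      c ≠ Letter.inv ((fun j => y.1 (n + j)) 0) := by
    intro c hc
    simp at hc
  have hchar := concatReduce_char (v := ([] : List (Letter d))) hx' hJ'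
  funext m
  have hm := hchar.2 m
  rw [List.nil_append] at hm
  rw [hm, extSeq_nil]

lemma getLast?_ofFn_prefix (x : Boundary d) (n : ℕ) (hn : 0 < n) :
    (List.ofFn fun i : Fin n => x.1 i).getLast? = some (x.1 (n - 1)) := by
  rw [List.getLast?_eq_getElem?, List.getElem?_eq_getElem (by simp; omega)]
  congr 1
  rw [List.getElem_ofFn]
  congr 1
  simp

lemma boundaryAct_mk_apply {p : List (Letter d)} (hp : LReduced p) (z : Boundary d)
    (hJ : ∀ c, p.getLast? = some c → c ≠ Letter.inv (z.1 0)) :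
    (boundaryAct (FreeGroup.mk p) z).1 = extSeq p z.1 := by
  rw [boundaryAct_coe, FreeGroup.toWord_mk, reduce_eq_self hp]
  have hx' : ∀ m, z.1 m = extSeq (FreeGroup.invRev ([] : List (Letter d))) z.1 m := by
    intro m
    rw [FreeGroup.invRev_empty, extSeq_nil]
  have hchar := concatReduce_char (v := p) (r := ([] : List (Letter d))) hx' hJ
  funext m
  have hm := hchar.2 m
  rw [List.append_nil] at hm
  exact hm

lemma sep_lemma (x y : Boundary d) (n₀ : ℕ) (a : Letter d)
    (hpre : ∀ i < n₀, y.1 i = x.1 i) (hxa : x.1 n₀ = a) (hyb : y.1 n₀ = Letter.inv a)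
    (hj : ∃ j, x.1 (n₀ + j) ≠ a) :
    ∃ (g : FreeGroup (Fin d)) (s : Fin d),
      qFun s (boundaryAct g⁻¹ x) ≠ qFun s (boundaryAct g⁻¹ y) := by
  classical
  have hm : x.1 (n₀ + Nat.find hj) ≠ a := Nat.find_spec hj
  have hmin : ∀ i < Nat.find hj, x.1 (n₀ + i) = a := fun i hi => not_not.mp (Nat.find_min hj hi)
  set m := Nat.find hj with hmdef
  have hm1 : 1 ≤ m := by
    rcases Nat.eq_zero_or_pos m with h0 | h0
    · exfalso; apply hm; rw [h0, Nat.add_zero]; exact hxa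
    · exact h0
  have hcinv : x.1 (n₀ + m) ≠ Letter.inv a := by
    have hr := x.2 (n₀ + m - 1)
    have he1 : n₀ + m - 1 + 1 = n₀ + m := by omega
    have he2 : n₀ + m - 1 = n₀ + (m - 1) := by omega
    rw [he1, he2, hmin (m - 1) (by omega)] at hr
    exact hr
  have hc1 : (x.1 (n₀ + m)).1 ≠ a.1 := by
    intro h
    by_cases h2 : (x.1 (n₀ + m)).2 = a.2
    · exact hm (Prod.ext_iff.mpr ⟨h, h2⟩)
    · have h2' : (x.1 (n₀ + m)).2 = !a.2 := by
        rcases hb : (x.1 (n₀ + m)).2 <;> rcases hb' : a.2 <;> simp_all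
      exact hcinv (Prod.ext_iff.mpr ⟨h, h2'⟩)
  refine ⟨FreeGroup.mk (List.ofFn fun i : Fin (n₀ + m) => x.1 i), (x.1 (n₀ + m)).1, ?_⟩
  have hX : (boundaryAct (FreeGroup.mk (List.ofFn fun i : Fin (n₀ + m) => x.1 i))⁻¹ x).1 =
      fun j => x.1 (n₀ + m + j) := boundaryAct_prefix_inv x x (n₀ + m) (fun _ _ => rfl)
  have hsplit : FreeGroup.invRev (List.ofFn fun i : Fin (n₀ + m) => x.1 i) =
      List.replicate m (Letter.inv a) ++ FreeGroup.invRev (List.ofFn fun i : Fin n₀ => x.1 i) := by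
    have h1 : (List.ofFn fun i : Fin (n₀ + m) => x.1 i) =
        (List.ofFn fun i : Fin n₀ => x.1 i) ++ List.replicate m a := by
      apply List.ext_getElem (by simp)
      intro i h1i h2i
      simp only [List.length_ofFn] at h1i
      rcases Nat.lt_or_ge i n₀ with hi | hi
      · rw [List.getElem_append_left (by simp; omega), List.getElem_ofFn, List.getElem_ofFn]
      · rw [List.getElem_append_right (by simp; omega), List.getElem_ofFn]
        simp only [List.length_ofFn]
        rw [List.getElem_replicate]
        have := hmin (i - n₀) (by omega)
        rw [show n₀ + (i - n₀) = i by omega] at this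
        exact this
    rw [h1]
    simp [FreeGroup.invRev, List.map_append, List.reverse_append, Letter.inv]
  have hY : (boundaryAct (FreeGroup.mk (List.ofFn fun i : Fin (n₀ + m) => x.1 i))⁻¹ y).1 =
      extSeq (List.replicate m (Letter.inv a)) (fun j => y.1 (n₀ + j)) := by
    rw [boundaryAct_coe, toWord_mk_inv_of_reduced (prefix_reduced x (n₀ + m)), hsplit]
    have hx' : ∀ mm, y.1 mm =
        extSeq (FreeGroup.invRev (FreeGroup.invRev (List.ofFn fun i : Fin n₀ => x.1 i)))
          (fun j => y.1 (n₀ + j)) mm := by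
      intro mm
      rw [FreeGroup.invRev_invRev]
      exact extSeq_ofFn_prefix x y n₀ hpre mm
    have hJ' : ∀ c, (List.replicate m (Letter.inv a)).getLast? = some c →
        c ≠ Letter.inv ((fun j => y.1 (n₀ + j)) 0) := by
      intro c hc
      have hrep : (List.replicate m (Letter.inv a)).getLast? = some (Letter.inv a) := by
        rw [List.getLast?_eq_getElem?, List.getElem?_eq_getElem (by simp; omega)]
        rw [List.getElem_replicate]
      rw [hrep] at hc
      have hca : c = Letter.inv a := (Option.some.inj hc).symm
      subst hca
      show Letter.inv a ≠ Letter.inv (y.1 (n₀ + 0))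
      rw [Nat.add_zero, hyb, Letter.inv_inv]
      exact Letter.inv_ne a
    have hchar := concatReduce_char hx' hJ'
    funext mm
    exact hchar.2 mm
  rw [qFun_eq, qFun_eq, hX, hY]
  have hfy : extSeq (List.replicate m (Letter.inv a)) (fun j => y.1 (n₀ + j)) 0 =
      Letter.inv a := by
    rw [extSeq_lt (by simp; omega), List.getElem_replicate]
  rw [hfy]
  have hfx : (fun j => x.1 (n₀ + m + j)) 0 = x.1 (n₀ + m) := by
    show x.1 (n₀ + m + 0) = x.1 (n₀ + m)
    rw [Nat.add_zero]
  rw [hfx, if_pos rfl, if_neg (by simpa using fun h => hc1 h.symm)]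
  exact one_ne_zero

end Aux3

/-- For every generator `s` and every `g ∈ F_d`, the function
`x ↦ q[s](g⁻¹·x)` is constant on each equivalence class of `R_S`; moreover this
family separates the classes of `R_S`. -/
theorem translates_of_q_separate_RS (d : ℕ) (hd : 2 ≤ d) :
    (∀ (s : Fin d) (g : FreeGroup (Fin d)) (x y : Boundary d),
      (x, y) ∈ RW (Set.range (FreeGroup.of : Fin d → FreeGroup (Fin d))) →
      qFun s (boundaryAct g⁻¹ x) = qFun s (boundaryAct g⁻¹ y)) ∧
    (∀ x y : Boundary d,
      (x, y) ∉ RW (Set.range (FreeGroup.of : Fin d → FreeGroup (Fin d))) →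
      ∃ (g : FreeGroup (Fin d)) (s : Fin d),
        qFun s (boundaryAct g⁻¹ x) ≠ qFun s (boundaryAct g⁻¹ y)) := by
  classical
  constructor
  · -- invariance
    rintro s g x y (heq | ⟨g', w, xp, xm, hw, hp, hm, hx1, hy1⟩)
    · have hxy : x = y := heq
      rw [hxy]
    · have ha : ∃ a : Letter d, w = FreeGroup.mk [a] := by
        rcases hw with ⟨s', hs'⟩ | ⟨s', hs'⟩
        · exact ⟨(s', true), hs'.symm⟩
        · refine ⟨(s', false), ?_⟩
          have hw2 : w = (FreeGroup.of s')⁻¹ := by rw [hs', inv_inv]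
          rw [hw2]
          show (FreeGroup.mk [((s', true) : Letter d)])⁻¹ = _
          rw [mk_single_inv]
          rfl
      obtain ⟨a, rfl⟩ := ha
      have hxp : xp = constB a := eq_const_of_isPlusLimit a xp hp
      have hxm : xm = constB a.inv := by
        apply eq_const_of_isPlusLimit
        rw [← mk_single_inv]
        exact hm
      have hx2 : x = boundaryAct g' xp := hx1
      have hy2 : y = boundaryAct g' xm := hy1
      rw [hx2, hy2, hxp, hxm, ← boundaryAct_mul, ← boundaryAct_mul]
      exact qFun_boundaryAct_const s (g⁻¹ * g') a
  · -- separation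
    intro x y hxy
    have hne : x ≠ y := fun h => hxy (Or.inl (by exact h))
    have hne1 : x.1 ≠ y.1 := fun h => hne (Subtype.ext h)
    have hex : ∃ n, x.1 n ≠ y.1 n := Function.ne_iff.mp hne1
    have hne0 : x.1 (Nat.find hex) ≠ y.1 (Nat.find hex) := Nat.find_spec hex
    have hpre : ∀ i < Nat.find hex, x.1 i = y.1 i :=
      fun i hi => not_not.mp (Nat.find_min hex hi)
    set n₀ := Nat.find hex with hn0
    by_cases hb1 : (y.1 n₀).1 = (x.1 n₀).1
    · have hbinv : y.1 n₀ = Letter.inv (x.1 n₀) := by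
        have h2 : (y.1 n₀).2 ≠ (x.1 n₀).2 := by
          intro h
          exact hne0 (Prod.ext_iff.mpr ⟨hb1.symm, h.symm⟩)
        refine Prod.ext_iff.mpr ⟨hb1, ?_⟩
        rcases hyy : (y.1 n₀).2 <;> rcases hxx : (x.1 n₀).2 <;> simp_all [Letter.inv]
      by_cases hcx : ∀ j, x.1 (n₀ + j) = x.1 n₀
      · by_cases hcy : ∀ j, y.1 (n₀ + j) = Letter.inv (x.1 n₀)
        · exfalso
          apply hxy
          right
          refine ⟨FreeGroup.mk (List.ofFn fun i : Fin n₀ => x.1 i), FreeGroup.mk [x.1 n₀],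
            constB (x.1 n₀), constB (Letter.inv (x.1 n₀)), ?_, isPlusLimit_const_mk _, ?_, ?_, ?_⟩
          · by_cases h2 : (x.1 n₀).2
            · left
              refine ⟨(x.1 n₀).1, ?_⟩
              show FreeGroup.mk [(((x.1 n₀).1, true) : Letter d)] = _
              rw [show (((x.1 n₀).1, true) : Letter d) = x.1 n₀ from
                Prod.ext_iff.mpr ⟨rfl, h2.symm⟩]
            · right
              rw [mk_single_inv]
              refine ⟨(x.1 n₀).1, ?_⟩
              show FreeGroup.mk [(((x.1 n₀).1, true) : Letter d)] = _
              have h2' : (x.1 n₀).2 = false := by simpa using h2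
              rw [show (((x.1 n₀).1, true) : Letter d) = Letter.inv (x.1 n₀) from
                Prod.ext_iff.mpr ⟨rfl, by simp [Letter.inv, h2']⟩]
          · rw [mk_single_inv]
            exact isPlusLimit_const_mk _
          · show x = _
            apply Subtype.ext
            rw [boundaryAct_mk_apply (prefix_reduced x n₀) (constB (x.1 n₀)) ?_]
            · funext i
              rcases Nat.lt_or_ge i n₀ with hi | hi
              · rw [extSeq_lt (by simp; omega), List.getElem_ofFn]
              · rw [extSeq_ge (by simp; omega)]
                show x.1 i = x.1 n₀
                have hcxi := hcx (i - n₀)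
                rw [show n₀ + (i - n₀) = i by omega] at hcxi
                exact hcxi
            · intro cc hcc
              rcases Nat.eq_zero_or_pos n₀ with h0 | h0
              · rw [h0] at hcc
                simp at hcc
              · rw [getLast?_ofFn_prefix x n₀ h0] at hcc
                have hcc2 : cc = x.1 (n₀ - 1) := (Option.some.inj hcc).symm
                subst hcc2
                show x.1 (n₀ - 1) ≠ Letter.inv (x.1 n₀)
                intro hcon
                have hr := x.2 (n₀ - 1)
                rw [show n₀ - 1 + 1 = n₀ by omega] at hr
                exact hr (Letter.eq_inv_swap.mp hcon)
          · show y = _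
            apply Subtype.ext
            rw [boundaryAct_mk_apply (prefix_reduced x n₀) (constB (Letter.inv (x.1 n₀))) ?_]
            · funext i
              rcases Nat.lt_or_ge i n₀ with hi | hi
              · rw [extSeq_lt (by simp; omega), List.getElem_ofFn]
                exact (hpre i hi).symm
              · rw [extSeq_ge (by simp; omega)]
                show y.1 i = Letter.inv (x.1 n₀)
                have hcyi := hcy (i - n₀)
                rw [show n₀ + (i - n₀) = i by omega] at hcyi
                exact hcyi
            · intro cc hcc
              rcases Nat.eq_zero_or_pos n₀ with h0 | h0
              · rw [h0] at hcc
                simp at hcc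
              · rw [getLast?_ofFn_prefix x n₀ h0] at hcc
                have hcc2 : cc = x.1 (n₀ - 1) := (Option.some.inj hcc).symm
                subst hcc2
                show x.1 (n₀ - 1) ≠ Letter.inv (Letter.inv (x.1 n₀))
                rw [Letter.inv_inv]
                intro hcon
                have hr := y.2 (n₀ - 1)
                rw [show n₀ - 1 + 1 = n₀ by omega, hbinv,
                  ← hpre (n₀ - 1) (by omega), hcon] at hr
                exact hr rfl
        · push_neg at hcy
          obtain ⟨g, s, hgs⟩ := sep_lemma y x n₀ (Letter.inv (x.1 n₀)) hpre hbinv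
            (by rw [Letter.inv_inv]) hcy
          exact ⟨g, s, hgs.symm⟩
      · push_neg at hcx
        exact sep_lemma x y n₀ (x.1 n₀) (fun i hi => (hpre i hi).symm) rfl hbinv hcx
    · refine ⟨FreeGroup.mk (List.ofFn fun i : Fin n₀ => x.1 i), (x.1 n₀).1, ?_⟩
      have hX := boundaryAct_prefix_inv x x n₀ (fun _ _ => rfl)
      have hY := boundaryAct_prefix_inv x y n₀ (fun i hi => (hpre i hi).symm)
      rw [qFun_eq, qFun_eq, hX, hY]
      have hfx : (fun j => x.1 (n₀ + j)) 0 = x.1 n₀ := by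
        show x.1 (n₀ + 0) = x.1 n₀
        rw [Nat.add_zero]
      have hfy : (fun j => y.1 (n₀ + j)) 0 = y.1 n₀ := by
        show y.1 (n₀ + 0) = y.1 n₀
        rw [Nat.add_zero]
      rw [hfx, hfy, if_pos rfl, if_neg hb1]
      exact one_ne_zero
end

section
/- The quotient space ∂F_d/R_S, equipped with the quotient topology, is homeomorphic to the Cantor set {0,1}^ℕ (equivalently, it is a nonempty compact metrizable totally disconnected space without isolated points). -/
namespace CantorAux

/-- Generic: a function determined by finitely many "coordinates" of a continuous
family of discrete-valued observations is continuous. -/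
theorem continuous_of_dep {X α β : Type*} [TopologicalSpace X]
    [TopologicalSpace α] [DiscreteTopology α] [TopologicalSpace β] [DiscreteTopology β]
    (g : X → ℕ → α) (hg : ∀ n, Continuous fun x => g x n) (f : X → β) (N : ℕ)
    (h : ∀ x y, (∀ i < N, g x i = g y i) → f x = f y) : Continuous f := by
  apply IsLocallyConstant.continuous
  rw [IsLocallyConstant.iff_exists_open]
  intro x
  refine ⟨⋂ i ∈ Finset.range N, {y | g y i = g x i}, ?_, ?_, ?_⟩
  · exact isOpen_biInter_finset fun i _ =>
      (isOpen_discrete {g x i}).preimage (hg i)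
  · simp
  · intro y hy
    simp only [Set.mem_iInter, Set.mem_setOf_eq, Finset.mem_range] at hy
    exact h y x fun i hi => hy i hi

/-! ### Prefix codes and the recoding homeomorphisms -/

/-- The "comb" prefix code on an alphabet of size `k`. -/
def code (k : ℕ) (t : ℕ) : List Bool :=
  if t = k - 1 ∧ 2 ≤ k then List.replicate t true else List.replicate t true ++ [false]

lemma code_length_pos (k t : ℕ) : 0 < (code k t).length := by
  unfold code; split
  · next h => simp; omega
  · simp

/-- Decode the first symbol: length of the initial run of `true`s, capped at `k-1`. -/
def hdD (k : ℕ) (b : ℕ → Bool) : ℕ :=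
  Nat.findGreatest (fun t => ∀ j < t, b j = true) (k - 1)

lemma hdD_le (k : ℕ) (b : ℕ → Bool) : hdD k b ≤ k - 1 := Nat.findGreatest_le _

lemma hdD_spec (k : ℕ) (b : ℕ → Bool) : ∀ j < hdD k b, b j = true :=
  Nat.findGreatest_spec (P := fun t => ∀ j < t, b j = true) (Nat.zero_le _) (by omega)

lemma hdD_false (k : ℕ) (b : ℕ → Bool) (h : hdD k b < k - 1) : b (hdD k b) = false := by
  have h2 := Nat.findGreatest_is_greatest (P := fun t => ∀ j < t, b j = true)
    (k := hdD k b + 1) (Nat.lt_succ_self _) (by omega)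
  by_contra hb
  apply h2
  intro j hj
  rcases Nat.lt_succ_iff_lt_or_eq.1 hj with hj | rfl
  · exact hdD_spec k b j hj
  · simpa using hb

/-- If `b` starts with `code k t` (for `t ≤ k-1`), then `hdD k b = t`. -/
lemma hdD_eq_of_code (k t : ℕ) (hk : 2 ≤ k) (ht : t ≤ k - 1) (b : ℕ → Bool)
    (hb : ∀ j (hj : j < (code k t).length), b j = (code k t)[j]) : hdD k b = t := by
  have hcode : ∀ j < t, b j = true := by
    intro j hj
    have hlen : j < (code k t).length := by
      unfold code; split <;> simp <;> omega
    rw [hb j hlen]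
    unfold code
    split
    · simp
    · rw [List.getElem_append_left (by simpa using hj)]
      simp
  rcases eq_or_lt_of_le ht with rfl | htlt
  · -- t = k - 1
    exact le_antisymm (hdD_le _ _) (Nat.le_findGreatest le_rfl hcode)
  · -- t < k - 1 : position t of the code is `false`
    have hf : b t = false := by
      have hlen : t < (code k t).length := by
        unfold code; split <;> simp <;> omega
      rw [hb t hlen]
      unfold code
      split
      · next h => omega
      · next h =>
        rw [List.getElem_append_right (by simp)]
        simp
    have h1 : t ≤ hdD k b := Nat.le_findGreatest (by omega) hcode
    rcases eq_or_lt_of_le h1 with h | h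
    · omega
    · exact absurd (hdD_spec k b t h) (by simp [hf])

/-- Encode a stream of naturals (interpreted mod the alphabet) as a stream of bits by
concatenating the prefix codes. -/
def Ee (k : ℕ) (s : ℕ → ℕ) (j : ℕ) : Bool :=
  if h : j < (code k (s 0)).length then (code k (s 0))[j]
  else Ee k (fun n => s (n + 1)) (j - (code k (s 0)).length)
termination_by j
decreasing_by
  have := code_length_pos k (s 0); omega

/-- Decode a stream of bits into a stream of naturals. -/
def Dd (k : ℕ) (b : ℕ → Bool) : ℕ → ℕ
  | 0 => hdD k b
  | n + 1 => Dd k (fun i => b (i + (code k (hdD k b)).length)) n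

lemma Dd_le (k : ℕ) (b : ℕ → Bool) : ∀ n, Dd k b n ≤ k - 1 := by
  intro n
  induction n generalizing b with
  | zero => exact hdD_le _ _
  | succ n ih => exact ih _

lemma Ee_eq_of_lt (k : ℕ) (s : ℕ → ℕ) (j : ℕ) (h : j < (code k (s 0)).length) :
    Ee k s j = (code k (s 0))[j] := by
  rw [Ee.eq_def]; simp [h]

lemma Ee_eq_of_ge (k : ℕ) (s : ℕ → ℕ) (j : ℕ) (h : ¬ j < (code k (s 0)).length) :
    Ee k s j = Ee k (fun n => s (n + 1)) (j - (code k (s 0)).length) := by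
  rw [Ee.eq_def]; simp [h]

/-- The bits of a stream starting at the decoded head agree with the code of the head. -/
lemma starts_with_code (k : ℕ) (hk : 2 ≤ k) (b : ℕ → Bool) :
    ∀ j (hj : j < (code k (hdD k b)).length), b j = (code k (hdD k b))[j] := by
  intro j hj
  set t := hdD k b with htdef
  by_cases ht : t = k - 1
  · have hc : code k t = List.replicate t true := by unfold code; rw [if_pos ⟨ht, hk⟩]
    rw [hc] at hj
    rw [List.getElem_of_eq hc, List.getElem_replicate]
    exact hdD_spec k b j (by simpa using hj)
  · have hc : code k t = List.replicate t true ++ [false] := by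
      unfold code; rw [if_neg (by tauto)]
    rw [hc] at hj
    rw [List.getElem_of_eq hc]
    simp only [List.length_append, List.length_replicate, List.length_singleton] at hj
    rcases lt_or_eq_of_le (Nat.lt_succ_iff.mp (by omega) : j ≤ t) with hjt | rfl
    · rw [List.getElem_append_left (by simpa using hjt)]
      simp [hdD_spec k b j hjt]
    · rw [List.getElem_append_right (by simp)]
      simp only [List.length_replicate, Nat.sub_self, List.getElem_singleton]
      have h1 := hdD_le k b
      exact hdD_false k b (by omega)

lemma Ee_Dd (k : ℕ) (hk : 2 ≤ k) (b : ℕ → Bool) : ∀ j, Ee k (Dd k b) j = b j := by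
  intro j
  induction j using Nat.strong_induction_on generalizing b with
  | _ j ih =>
    have hd0 : Dd k b 0 = hdD k b := rfl
    by_cases h : j < (code k (Dd k b 0)).length
    · rw [Ee_eq_of_lt k _ j h]
      rw [hd0] at h
      simp only [hd0]
      exact (starts_with_code k hk b j h).symm
    · rw [Ee_eq_of_ge k _ j h]
      rw [hd0] at h
      have hlen := code_length_pos k (hdD k b)
      have hshift : (fun n => Dd k b (n + 1)) =
          Dd k (fun i => b (i + (code k (hdD k b)).length)) := by
        funext n; rfl
      simp only [hd0, hshift]
      rw [ih _ (by omega) _]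
      congr 1
      omega

lemma Dd_Ee (k : ℕ) (hk : 2 ≤ k) (s : ℕ → ℕ) (hs : ∀ n, s n ≤ k - 1) :
    ∀ n, Dd k (Ee k s) n = s n := by
  intro n
  induction n generalizing s with
  | zero =>
    exact hdD_eq_of_code k (s 0) hk (hs 0) _ (fun j hj => Ee_eq_of_lt k s j hj)
  | succ n ih =>
    have hhd : hdD k (Ee k s) = s 0 :=
      hdD_eq_of_code k (s 0) hk (hs 0) _ (fun j hj => Ee_eq_of_lt k s j hj)
    show Dd k (fun i => Ee k s (i + (code k (hdD k (Ee k s))).length)) n = s (n + 1)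
    have htail : (fun i => Ee k s (i + (code k (hdD k (Ee k s))).length)) =
        Ee k (fun m => s (m + 1)) := by
      funext i
      rw [hhd, Ee_eq_of_ge k s _ (by omega)]
      congr 1
      omega
    rw [htail, ih _ (fun m => hs (m + 1))]

/-- Each bit of the encoding depends only on the first `j+1` symbols. -/
lemma Ee_dep (k : ℕ) : ∀ j (s s' : ℕ → ℕ), (∀ i ≤ j, s i = s' i) → Ee k s j = Ee k s' j := by
  intro j
  induction j using Nat.strong_induction_on with
  | _ j ih =>
    intro s s' hss
    have h0 : s 0 = s' 0 := hss 0 (Nat.zero_le _)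
    by_cases h : j < (code k (s 0)).length
    · rw [Ee_eq_of_lt k s j h, Ee_eq_of_lt k s' j (h0 ▸ h)]
      simp only [h0]
    · have h' : ¬ j < (code k (s' 0)).length := by rw [← h0]; exact h
      rw [Ee_eq_of_ge k s j h, Ee_eq_of_ge k s' j h', h0]
      have hlen := code_length_pos k (s' 0)
      exact ih _ (by omega) _ _ (fun i hi => hss (i + 1) (by omega))

end CantorAux

namespace CantorAux

/-- `(ℕ → Fin k) ≃ₜ (ℕ → Bool)` for `k ≥ 2`. -/
noncomputable def homeoPiFin (k : ℕ) (hk : 2 ≤ k) : (ℕ → Fin k) ≃ₜ (ℕ → Bool) := by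
  set E' : (ℕ → Fin k) → (ℕ → Bool) := fun s => Ee k (fun n => (s n : ℕ)) with hE'
  have hbound : ∀ (s : ℕ → Fin k) (n : ℕ), ((s n : ℕ)) ≤ k - 1 := by
    intro s n; have := (s n).isLt; omega
  have hbij : Function.Bijective E' := by
    constructor
    · intro s s' hss
      have hss' : Ee k (fun n => ((s n : ℕ))) = Ee k (fun n => ((s' n : ℕ))) := hss
      funext n
      have h1 := Dd_Ee k hk (fun n => (s n : ℕ)) (hbound s) n
      have h2 := Dd_Ee k hk (fun n => (s' n : ℕ)) (hbound s') n
      apply Fin.ext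
      rw [← h1, ← h2, hss']
    · intro b
      refine ⟨fun n => ⟨Dd k b n, by have := Dd_le k b n; omega⟩, ?_⟩
      funext j
      exact Ee_Dd k hk b j
  have hcont : Continuous E' := by
    apply continuous_pi
    intro j
    refine continuous_of_dep (fun s n => (s n : ℕ)) (fun n => ?_) _ (j + 1) ?_
    · exact Continuous.comp continuous_of_discreteTopology (continuous_apply n)
    · intro s s' h
      exact Ee_dep k j _ _ (fun i hi => h i (by omega))
  exact Continuous.homeoOfEquivCompactToT2 (f := Equiv.ofBijective E' hbij) hcont

/-- `Fin m × (ℕ → Bool) ≃ₜ (ℕ → Bool)` for `m ≥ 2`. -/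
noncomputable def homeoProdFin (m : ℕ) (hm : 2 ≤ m) : (Fin m × (ℕ → Bool)) ≃ₜ (ℕ → Bool) := by
  set E2 : Fin m × (ℕ → Bool) → (ℕ → Bool) := fun p j =>
    if h : j < (code m (p.1 : ℕ)).length then (code m (p.1 : ℕ))[j]
    else p.2 (j - (code m (p.1 : ℕ)).length) with hE2
  have hbij : Function.Bijective E2 := by
    constructor
    · rintro ⟨i, b⟩ ⟨i', b'⟩ h
      have hbit : ∀ j (hj : j < (code m (i : ℕ)).length), E2 (i, b) j = (code m (i : ℕ))[j] := by
        intro j hj; simp only [hE2]; rw [dif_pos hj]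
      have hbit' : ∀ j (hj : j < (code m (i' : ℕ)).length), E2 (i', b') j = (code m (i' : ℕ))[j] := by
        intro j hj; simp only [hE2]; rw [dif_pos hj]
      have hd : hdD m (E2 (i, b)) = (i : ℕ) :=
        hdD_eq_of_code m i hm (by have := i.isLt; omega) _ hbit
      have hd' : hdD m (E2 (i', b')) = (i' : ℕ) :=
        hdD_eq_of_code m i' hm (by have := i'.isLt; omega) _ hbit'
      have hii : i = i' := by apply Fin.ext; rw [← hd, ← hd', h]
      subst hii
      have hbb : b = b' := by
        funext n
        have e1 : E2 (i, b) (n + (code m (i : ℕ)).length) = b n := by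
          simp only [hE2]
          rw [dif_neg (by omega)]
          congr 1; omega
        have e2 : E2 (i, b') (n + (code m (i : ℕ)).length) = b' n := by
          simp only [hE2]
          rw [dif_neg (by omega)]
          congr 1; omega
        rw [← e1, ← e2, h]
      rw [hbb]
    · intro b
      have hlt : hdD m b < m := by have := hdD_le m b; omega
      refine ⟨(⟨hdD m b, hlt⟩, fun n => b (n + (code m (hdD m b)).length)), ?_⟩
      funext j
      simp only [hE2]
      by_cases h : j < (code m (hdD m b)).length
      · rw [dif_pos h]
        exact (starts_with_code m hm b j h).symm
      · rw [dif_neg h]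
        congr 1; omega
  have hcont : Continuous E2 := by
    apply continuous_pi
    intro j
    refine continuous_of_dep (fun p n => Nat.pair (p.1 : ℕ) ((p.2 n).toNat))
      (fun n => ?_) _ (j + 1) ?_
    · exact Continuous.comp (g := fun v : Fin m × Bool => Nat.pair (v.1 : ℕ) v.2.toNat)
        continuous_of_discreteTopology
        (Continuous.prodMk continuous_fst ((continuous_apply n).comp continuous_snd))
    rintro ⟨i, b⟩ ⟨i', b'⟩ h
    have h' : ∀ n < j + 1, (i : ℕ) = (i' : ℕ) ∧ (b n).toNat = (b' n).toNat := by
      intro n hn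
      have := h n hn
      rw [Nat.pair_eq_pair] at this
      exact this
    have hii : i = i' := Fin.ext (h' 0 (by omega)).1
    subst hii
    simp only [hE2]
    by_cases hj : j < (code m (i : ℕ)).length
    · rw [dif_pos hj, dif_pos hj]
    · rw [dif_neg hj, dif_neg hj]
      have hb : (b (j - (code m (i : ℕ)).length)).toNat = (b' (j - (code m (i : ℕ)).length)).toNat :=
        (h' _ (by omega)).2
      revert hb
      cases b (j - (code m (i : ℕ)).length) <;> cases b' (j - (code m (i : ℕ)).length) <;> simp
  exact Continuous.homeoOfEquivCompactToT2 (f := Equiv.ofBijective E2 hbij) hcont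

end CantorAux


namespace CantorStage1

open CantorAux

variable {d : ℕ}

theorem Letter.inv_invol (a : Letter d) : Letter.inv (Letter.inv a) = a := by
  cases a; simp [Letter.inv]

theorem Letter.inv_fst (a : Letter d) : (Letter.inv a).1 = a.1 := rfl

theorem ne_inv_symm {a b : Letter d} (h : a ≠ Letter.inv b) : b ≠ Letter.inv a := by
  intro hb
  apply h
  rw [hb, Letter.inv_invol]

theorem inv_ne_self (a : Letter d) : Letter.inv a ≠ a := by
  cases a with
  | mk i s => cases s <;> simp [Letter.inv]

theorem self_ne_inv (a : Letter d) : a ≠ Letter.inv a := (inv_ne_self a).symm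

theorem letter_eq_of_fst_eq {a b : Letter d} (hne : b ≠ Letter.inv a) (h : b.1 = a.1) :
    b = a := by
  cases a with
  | mk i s =>
    cases b with
    | mk i' s' =>
      simp only at h
      subst h
      cases s <;> cases s' <;> simp_all [Letter.inv]

theorem eq_of_fst_eq {x : ℕ → Letter d} (hx : IsReducedSeq x) {n : ℕ}
    (h : (x (n + 1)).1 = (x n).1) : x (n + 1) = x n :=
  letter_eq_of_fst_eq (hx n) h

/-! ### Reduced lists and `FreeGroup.reduce` -/

def RedList (L : List (Letter d)) : Prop :=
  List.Chain' (fun a b => b ≠ Letter.inv a) L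

theorem reduce_eq_self {L : List (Letter d)} (h : RedList L) : FreeGroup.reduce L = L := by
  induction L with
  | nil => rfl
  | cons a L ih =>
    rw [FreeGroup.reduce.cons, ih h.tail]
    cases L with
    | nil => rfl
    | cons b t =>
      have hab : b ≠ Letter.inv a := (List.isChain_cons_cons.1 h).1
      simp only
      rw [if_neg]
      rintro ⟨h1, h2⟩
      apply hab
      cases a with
      | mk i s =>
        cases b with
        | mk i' s' =>
          simp only at h1 h2
          subst h1
          cases s <;> cases s' <;> simp [Letter.inv] <;> simp at h2

theorem redList_reduce (L : List (Letter d)) : RedList (FreeGroup.reduce L) := by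
  induction L with
  | nil => exact List.isChain_nil
  | cons a L ih =>
    rw [FreeGroup.reduce.cons]
    cases hred : FreeGroup.reduce L with
    | nil => exact List.isChain_singleton a
    | cons b t =>
      rw [hred] at ih
      simp only
      split
      · exact ih.tail
      · next hcond =>
        refine List.isChain_cons_cons.2 ⟨?_, ih⟩
        intro hb
        apply hcond
        cases a with
        | mk i s =>
          cases b with
          | mk i' s' =>
            cases s <;> cases s' <;> simp [Letter.inv] at hb <;> simp [hb]

theorem toWord_mk_eq {L : List (Letter d)} (h : RedList L) : (FreeGroup.mk L).toWord = L := by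
  rw [FreeGroup.toWord_mk, reduce_eq_self h]

theorem redList_toWord (g : FreeGroup (Fin d)) : RedList g.toWord := by
  have := FreeGroup.reduce_toWord g
  rw [← this]
  exact redList_reduce _

theorem toWord_pow_neg (i : Fin d) (n : ℕ) :
    (((FreeGroup.of i)⁻¹) ^ n).toWord = List.replicate n (i, false) := by
  rw [inv_pow, FreeGroup.toWord_inv, FreeGroup.toWord_of_pow]
  unfold FreeGroup.invRev
  rw [List.map_replicate, List.reverse_replicate]
  rfl

/-- The free-group element corresponding to a letter. -/
def genFor (a : Letter d) : FreeGroup (Fin d) :=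
  if a.2 then FreeGroup.of a.1 else (FreeGroup.of a.1)⁻¹

theorem toWord_genFor_pow (a : Letter d) (n : ℕ) :
    (genFor a ^ n).toWord = List.replicate n a := by
  cases a with
  | mk i s =>
    cases s
    · rw [show genFor (i, false) = (FreeGroup.of i)⁻¹ from rfl, toWord_pow_neg]
    · rw [show genFor (i, true) = FreeGroup.of i from rfl, FreeGroup.toWord_of_pow]

theorem genFor_inv (a : Letter d) : (genFor a)⁻¹ = genFor (Letter.inv a) := by
  cases a with
  | mk i s => cases s <;> simp [genFor, Letter.inv]

theorem genFor_mem (a : Letter d) :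
    genFor a ∈ Set.range (FreeGroup.of : Fin d → FreeGroup (Fin d)) ∨
    (genFor a)⁻¹ ∈ Set.range (FreeGroup.of : Fin d → FreeGroup (Fin d)) := by
  cases a with
  | mk i s =>
    cases s
    · right; simp [genFor]
    · left; simp [genFor]

theorem isReduced_const (a : Letter d) : IsReducedSeq (fun _ : ℕ => a) :=
  fun _ => self_ne_inv a

/-- The constant boundary point `a^∞`. -/
def constB (a : Letter d) : Boundary d := ⟨fun _ => a, isReduced_const a⟩

theorem isPlusLimit_genFor (a : Letter d) : IsPlusLimit (genFor a) (constB a) := by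
  intro k
  refine ⟨k, fun n hn => ?_⟩
  rw [toWord_genFor_pow]
  constructor
  · simpa using hn
  · intro i hi
    rw [List.getElem?_replicate]
    simp [show i < n by omega]
    rfl

theorem isPlusLimit_unique {w : FreeGroup (Fin d)} {x : Boundary d} {a : Letter d}
    (hw : ∀ n, (w ^ n).toWord = List.replicate n a) (h : IsPlusLimit w x) :
    x.1 = fun _ => a := by
  funext j
  obtain ⟨N, hN⟩ := h (j + 1)
  obtain ⟨hlen, hget⟩ := hN (max N (j + 1)) (le_max_left _ _)
  have hj := hget j (by omega)
  rw [hw, List.getElem?_replicate] at hj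
  have hjlt : j < max N (j + 1) := by omega
  rw [if_pos hjlt] at hj
  exact (Option.some_injective _ hj).symm

/-! ### `cancelLen` and `concatReduce` -/

theorem cancelLen_le (u : List (Letter d)) (x : ℕ → Letter d) : cancelLen u x ≤ u.length :=
  Nat.findGreatest_le _

theorem cancelLen_spec (u : List (Letter d)) (x : ℕ → Letter d) :
    ∀ i < cancelLen u x, u[u.length - 1 - i]? = some (Letter.inv (x i)) :=
  Nat.findGreatest_spec
    (P := fun k => ∀ i < k, u[u.length - 1 - i]? = some (Letter.inv (x i)))
    (n := u.length) (Nat.zero_le _) (fun i hi => absurd hi (Nat.not_lt_zero i))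

theorem cancelLen_junction (u : List (Letter d)) (x : ℕ → Letter d)
    (h : cancelLen u x < u.length) :
    ¬(u[u.length - 1 - cancelLen u x]? = some (Letter.inv (x (cancelLen u x)))) := by
  intro hc
  have hgr := Nat.findGreatest_is_greatest
    (P := fun k => ∀ i < k, u[u.length - 1 - i]? = some (Letter.inv (x i)))
    (n := u.length) (k := cancelLen u x + 1) (Nat.lt_succ_self _) (by omega)
  apply hgr
  intro i hi
  rcases Nat.lt_succ_iff_lt_or_eq.1 hi with hi | rfl
  · exact cancelLen_spec u x i hi
  · exact hc

theorem concatReduce_apply (u : List (Letter d)) (x : ℕ → Letter d) (n : ℕ) :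
    concatReduce u x n =
      if h : n < u.length - cancelLen u x then u[n]'(by omega)
      else x (cancelLen u x + (n - (u.length - cancelLen u x))) := rfl

theorem concatReduce_isReduced {u : List (Letter d)} (hu : RedList u) {x : ℕ → Letter d}
    (hx : IsReducedSeq x) : IsReducedSeq (concatReduce u x) := by
  intro n
  have hkle := cancelLen_le u x
  set k := cancelLen u x with hk
  set m := u.length - k with hm
  rw [concatReduce_apply, concatReduce_apply]
  by_cases h1 : n + 1 < m
  · rw [dif_pos h1, dif_pos (by omega)]
    have hc := List.isChain_iff_getElem.1 hu n (by omega)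
    simpa using hc
  · by_cases h2 : n < m
    · -- junction: n + 1 = m
      rw [dif_neg h1, dif_pos h2]
      have hmn : n + 1 = m := by omega
      have hklt : k < u.length := by omega
      have hj := cancelLen_junction u x (by omega)
      have hidx : u.length - 1 - k = n := by omega
      rw [hidx] at hj
      have hget : u[n]? = some (u[n]'(by omega)) := List.getElem?_eq_getElem (by omega)
      have hne : u[n]'(by omega) ≠ Letter.inv (x k) := by
        intro hcc
        apply hj
        rw [hget, hcc]
      have : n + 1 - m = 0 := by omega
      rw [this]
      simpa using ne_inv_symm hne
    · rw [dif_neg h1, dif_neg h2]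
      have : k + (n + 1 - m) = (k + (n - m)) + 1 := by omega
      rw [this]
      exact hx _

/-- Append a constant infinite tail to a finite word. -/
def appC (v : List (Letter d)) (c : Letter d) : ℕ → Letter d := fun n =>
  if h : n < v.length then v[n] else c

theorem cancelLen_eq_zero {u : List (Letter d)} {c : Letter d}
    (h : ∀ hne : u ≠ [], u.getLast hne ≠ Letter.inv c) : cancelLen u (fun _ => c) = 0 := by
  cases hu : u with
  | nil => rfl
  | cons a t =>
    rw [← hu]
    have hne : u ≠ [] := by rw [hu]; simp
    refine Nat.findGreatest_eq_zero_iff.2 ?_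
    intro n hn hnl hP
    have h0 := hP 0 hn
    have hlast : u.getLast hne = u[u.length - 1]'(by
      have : u.length ≠ 0 := by simp [hu]
      omega) := List.getLast_eq_getElem hne
    rw [List.getElem?_eq_getElem (by
      have : u.length ≠ 0 := by simp [hu]
      omega)] at h0
    apply h hne
    rw [hlast]
    simpa using h0

theorem concatReduce_no_cancel {u : List (Letter d)} {c : Letter d}
    (h : ∀ hne : u ≠ [], u.getLast hne ≠ Letter.inv c) :
    concatReduce u (fun _ => c) = appC u c := by
  funext n
  rw [concatReduce_apply]; simp only [cancelLen_eq_zero h]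
  unfold appC
  by_cases hn : n < u.length
  · rw [dif_pos (by omega), dif_pos hn]
  · rw [dif_neg (by omega), dif_neg hn]

theorem cancelLen_concat_inv (u : List (Letter d)) (c : Letter d) :
    cancelLen (u ++ [Letter.inv c]) (fun _ => c) = cancelLen u (fun _ => c) + 1 := by
  set k := cancelLen u (fun _ => c) with hkdef
  have hkle := cancelLen_le u (fun _ => c)
  have hlen : (u ++ [Letter.inv c]).length = u.length + 1 := by simp
  have hle : k + 1 ≤ cancelLen (u ++ [Letter.inv c]) (fun _ => c) := by
    apply Nat.le_findGreatest (by omega)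
    intro i hi
    rw [hlen]
    cases i with
    | zero =>
      have : u.length + 1 - 1 - 0 = u.length := by omega
      rw [this]
      have := List.getElem?_concat_length (l := u) (a := Letter.inv c)
      rw [this]
    | succ j =>
      have hj : j < k := by omega
      have hjl : j < u.length := by omega
      have hidx : u.length + 1 - 1 - (j + 1) = u.length - 1 - j := by omega
      rw [hidx, List.getElem?_append_left (by omega)]
      exact cancelLen_spec u (fun _ => c) j hj
  have hge : cancelLen (u ++ [Letter.inv c]) (fun _ => c) ≤ k + 1 := by
    by_contra hgt
    push_neg at hgt
    have hcle := cancelLen_le (u ++ [Letter.inv c]) (fun _ => c)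
    rw [hlen] at hcle
    have hP : k + 1 ≤ cancelLen u (fun _ => c) := by
      apply Nat.le_findGreatest (by omega)
      intro j hj
      have hspec := cancelLen_spec (u ++ [Letter.inv c]) (fun _ => c) (j + 1) (by omega)
      rw [hlen] at hspec
      have hidx : u.length + 1 - 1 - (j + 1) = u.length - 1 - j := by omega
      rw [hidx, List.getElem?_append_left (by omega)] at hspec
      exact hspec
    omega
  omega

theorem appC_concat (v : List (Letter d)) (c : Letter d) : appC (v ++ [c]) c = appC v c := by
  funext n
  unfold appC
  rcases lt_trichotomy n v.length with hn | rfl | hn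
  · rw [dif_pos (by simp; omega), dif_pos hn, List.getElem_append_left hn]
  · rw [dif_pos (by simp), dif_neg (by omega)]
    simp
  · rw [dif_neg (by simp; omega), dif_neg (by omega)]

theorem concatReduce_concat_inv (u : List (Letter d)) (c : Letter d) :
    concatReduce (u ++ [Letter.inv c]) (fun _ => c) = concatReduce u (fun _ => c) := by
  funext n
  have hcl := cancelLen_concat_inv u c
  have hkle := cancelLen_le u (fun _ => c)
  have hlen : (u ++ [Letter.inv c]).length = u.length + 1 := by simp
  rw [concatReduce_apply, concatReduce_apply]
  by_cases hn : n < u.length - cancelLen u (fun _ => c)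
  · rw [dif_pos (by rw [hcl, hlen]; omega : n < (u ++ [Letter.inv c]).length -
      cancelLen (u ++ [Letter.inv c]) (fun _ => c)), dif_pos hn]
    exact List.getElem_append_left (by omega)
  · rw [dif_neg (by rw [hcl, hlen]; omega), dif_neg hn]

end CantorStage1


namespace CantorStage1

open CantorAux

variable {d : ℕ}

/-! ### The decision stream -/

/-- The decision when moving from letter `p` to letter `q`:
`0` if the run continues, otherwise an encoding of the revealed sign of `p`
together with the new generator index. -/
def decPair (p q : Letter d) : ℕ :=
  if q.1 = p.1 then 0
  else 1 + (if p.2 then 0 else d - 1) +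
    (if (q.1 : ℕ) < (p.1 : ℕ) then (q.1 : ℕ) else (q.1 : ℕ) - 1)

theorem decPair_lt (p q : Letter d) : decPair p q < 2 * d - 1 := by
  have h1 := p.1.isLt
  have h2 := q.1.isLt
  unfold decPair
  split
  · omega
  · next h =>
    have hne : (q.1 : ℕ) ≠ (p.1 : ℕ) := fun hh => h (Fin.ext hh)
    split_ifs <;> omega

theorem decPair_eq_zero_iff {p q : Letter d} : decPair p q = 0 ↔ q.1 = p.1 := by
  unfold decPair
  split
  · next h => simpa using h
  · next h =>
    refine iff_of_false ?_ h
    split_ifs <;> omega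

theorem decPair_inv_snd (p q : Letter d) : decPair p (Letter.inv q) = decPair p q := rfl

theorem decPair_inj {p p' q q' : Letter d} (hp : p.1 = p'.1)
    (hq : q.1 ≠ p.1) (hq' : q'.1 ≠ p'.1)
    (h : decPair p q = decPair p' q') : p.2 = p'.2 ∧ q.1 = q'.1 := by
  obtain ⟨p1, pb⟩ := p
  obtain ⟨p1', pb'⟩ := p'
  obtain ⟨q1, qb⟩ := q
  obtain ⟨q1', qb'⟩ := q'
  simp only at hp hq hq' ⊢
  subst hp
  have h1 : (p1 : ℕ) < d := p1.isLt
  have h2 : (q1 : ℕ) < d := q1.isLt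
  have h3 : (q1' : ℕ) < d := q1'.isLt
  have hqv : (q1 : ℕ) ≠ (p1 : ℕ) := fun hh => hq (Fin.ext hh)
  have hqv' : (q1' : ℕ) ≠ (p1 : ℕ) := fun hh => hq' (Fin.ext hh)
  unfold decPair at h
  simp only at h
  rw [if_neg hq, if_neg hq'] at h
  cases pb <;> cases pb' <;> simp at h
  · exact ⟨rfl, Fin.ext (by split_ifs at h <;> omega)⟩
  · exfalso; split_ifs at h <;> omega
  · exfalso; split_ifs at h <;> omega
  · exact ⟨rfl, Fin.ext (by split_ifs at h <;> omega)⟩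

/-- The decision sequence of a sequence of letters. -/
def decSeq (x : ℕ → Letter d) (n : ℕ) : ℕ := decPair (x n) (x (n + 1))

/-- The full decision data of a boundary point. -/
def dec (x : Boundary d) : Fin d × (ℕ → Fin (2 * d - 1)) :=
  ((x.1 0).1, fun n => ⟨decSeq x.1 n, decPair_lt _ _⟩)

theorem dec_eq_iff {x y : Boundary d} :
    dec x = dec y ↔ ((x.1 0).1 = (y.1 0).1 ∧ ∀ n, decSeq x.1 n = decSeq y.1 n) := by
  unfold dec
  rw [Prod.ext_iff]
  simp [funext_iff, Fin.ext_iff]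

/-! ### Invariance of the decision stream -/

/-- Raw decision data of an arbitrary sequence of letters. -/
def rawDec (x : ℕ → Letter d) : Fin d × (ℕ → ℕ) := ((x 0).1, decSeq x)

theorem rawDec_appC (v : List (Letter d)) (a : Letter d) :
    rawDec (appC v a) = rawDec (appC v (Letter.inv a)) := by
  unfold rawDec
  refine Prod.ext ?_ ?_
  · by_cases h0 : 0 < v.length
    · simp only [appC]
      rw [dif_pos h0, dif_pos h0]
    · simp only [appC]
      rw [dif_neg h0, dif_neg h0]
      rfl
  · funext n
    simp only [decSeq, appC]
    by_cases h1 : n + 1 < v.length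
    · rw [dif_pos h1, dif_pos h1, dif_pos (by omega), dif_pos (by omega)]
    · by_cases h2 : n < v.length
      · rw [dif_pos h2, dif_pos h2, dif_neg h1, dif_neg h1]
        exact (decPair_inv_snd _ _).symm
      · rw [dif_neg h2, dif_neg h2, dif_neg h1, dif_neg h1]
        rw [decPair_eq_zero_iff.2 rfl, decPair_eq_zero_iff.2 rfl]

theorem concatReduce_nil (c : Letter d) :
    concatReduce ([] : List (Letter d)) (fun _ => c) = appC [] c := by
  funext n
  rw [concatReduce_apply]
  simp [appC]

theorem rawDec_concat (a : Letter d) (u : List (Letter d)) (hu : RedList u) :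
    rawDec (concatReduce u (fun _ => a)) =
      rawDec (concatReduce u (fun _ => Letter.inv a)) := by
  induction u using List.reverseRecOn generalizing a with
  | nil =>
    rw [concatReduce_nil, concatReduce_nil]
    exact rawDec_appC [] a
  | append_singleton u' e ih =>
    have hu' : RedList u' := List.IsChain.prefix hu ⟨[e], rfl⟩
    have hlast' : ∀ hne : u' ≠ [], u'.getLast hne ≠ Letter.inv e := by
      intro hne
      have hchain := (List.isChain_append.1 hu).2.2
      have hmem : u'.getLast? = some (u'.getLast hne) :=
        List.getLast?_eq_getLast_of_ne_nil hne
      have := hchain (u'.getLast hne) (by rw [hmem]; rfl) e (by simp)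
      exact ne_inv_symm this
    have hgl : ∀ hne : u' ++ [e] ≠ [], (u' ++ [e]).getLast hne = e := by
      intro hne
      simp
    by_cases he : e.1 = a.1
    · have hcase : e = a ∨ e = Letter.inv a := by
        cases a with
        | mk i s =>
          cases e with
          | mk i' s' =>
            simp only at he
            subst he
            cases s <;> cases s' <;> simp [Letter.inv]
      rcases hcase with rfl | he2
      · -- e = a
        have h1 : concatReduce (u' ++ [e]) (fun _ => Letter.inv e) =
            concatReduce u' (fun _ => Letter.inv e) := by
          have := concatReduce_concat_inv u' (Letter.inv e)
          rwa [Letter.inv_invol] at this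
        have h2 : concatReduce (u' ++ [e]) (fun _ => e) = appC (u' ++ [e]) e :=
          concatReduce_no_cancel (fun hne => by
            rw [hgl hne]; exact self_ne_inv e)
        have h3 : appC (u' ++ [e]) e = appC u' e := appC_concat u' e
        have h4 : concatReduce u' (fun _ => e) = appC u' e :=
          concatReduce_no_cancel hlast'
        rw [h1, h2, h3, ← h4]
        exact ih e hu'
      · -- e = inv a
        subst he2
        have h1 : concatReduce (u' ++ [Letter.inv a]) (fun _ => a) =
            concatReduce u' (fun _ => a) := concatReduce_concat_inv u' a
        have h2 : concatReduce (u' ++ [Letter.inv a]) (fun _ => Letter.inv a) =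
            appC (u' ++ [Letter.inv a]) (Letter.inv a) :=
          concatReduce_no_cancel (fun hne => by
            rw [hgl hne]; exact self_ne_inv (Letter.inv a))
        have h3 : appC (u' ++ [Letter.inv a]) (Letter.inv a) = appC u' (Letter.inv a) :=
          appC_concat u' (Letter.inv a)
        have h4 : concatReduce u' (fun _ => Letter.inv a) = appC u' (Letter.inv a) :=
          concatReduce_no_cancel hlast'
        rw [h1, h2, h3, ← h4]
        exact ih a hu'
    · -- last letter from a different generator pair
      have h1 : concatReduce (u' ++ [e]) (fun _ => a) = appC (u' ++ [e]) a :=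
        concatReduce_no_cancel (fun hne => by
          rw [hgl hne]
          intro hc
          exact he (by rw [hc]; rfl))
      have h2 : concatReduce (u' ++ [e]) (fun _ => Letter.inv a) =
          appC (u' ++ [e]) (Letter.inv a) :=
        concatReduce_no_cancel (fun hne => by
          rw [hgl hne]
          intro hc
          apply he
          rw [hc, Letter.inv_invol]  -- hc : e = inv (inv a) = a
        )
      rw [h1, h2]
      exact rawDec_appC (u' ++ [e]) a

end CantorStage1


namespace CantorStage1

open CantorAux

variable {d : ℕ}

theorem letter_inv_of_ne {a b : Letter d} (h1 : b.1 = a.1) (h2 : b ≠ a) :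
    b = Letter.inv a := by
  obtain ⟨a1, ab⟩ := a
  obtain ⟨b1, bb⟩ := b
  simp only at h1
  subst h1
  cases ab <;> cases bb <;> simp_all [Letter.inv]

theorem appC_isReduced {v : List (Letter d)} (hv : RedList v) {c : Letter d}
    (hlast : ∀ hne : v ≠ [], v.getLast hne ≠ Letter.inv c) :
    IsReducedSeq (appC v c) := by
  rw [← concatReduce_no_cancel hlast]
  exact concatReduce_isReduced hv (isReduced_const c)

theorem boundaryAct_eval (v : List (Letter d)) (hv : RedList v) (c : Letter d)
    (hlast : ∀ hne : v ≠ [], v.getLast hne ≠ Letter.inv c) :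
    (boundaryAct (FreeGroup.mk v) (constB c)).1 = appC v c := by
  unfold boundaryAct
  have hred : IsReducedSeq (concatReduce (FreeGroup.mk v).toWord (constB c).1) := by
    rw [toWord_mk_eq hv]
    exact concatReduce_isReduced hv (isReduced_const c)
  rw [dif_pos hred]
  show concatReduce (FreeGroup.mk v).toWord (constB c).1 = appC v c
  rw [toWord_mk_eq hv]
  exact concatReduce_no_cancel hlast

theorem boundaryAct_const (g : FreeGroup (Fin d)) (c : Letter d) :
    (boundaryAct g (constB c)).1 = concatReduce g.toWord (fun _ => c) := by
  unfold boundaryAct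
  have hred : IsReducedSeq (concatReduce g.toWord (constB c).1) :=
    concatReduce_isReduced (redList_toWord g) (isReduced_const c)
  rw [dif_pos hred]
  rfl

theorem dec_invariant {x y : Boundary d}
    (h : (x, y) ∈ RW (Set.range (FreeGroup.of : Fin d → FreeGroup (Fin d)))) :
    dec x = dec y := by
  rcases h with heq | ⟨g, w, xp, xm, hw, hp, hm, hx1, hy1⟩
  · have hxy : x = y := heq
    rw [hxy]
  · have ha : ∃ a : Letter d, (∀ n, (w ^ n).toWord = List.replicate n a) ∧
        (∀ n, ((w⁻¹) ^ n).toWord = List.replicate n (Letter.inv a)) := by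
      rcases hw with ⟨i, hi⟩ | ⟨i, hi⟩
      · refine ⟨(i, true), ?_, ?_⟩
        · intro n; rw [← hi, FreeGroup.toWord_of_pow]
        · intro n; rw [← hi, toWord_pow_neg]; rfl
      · have hwi : w = (FreeGroup.of i)⁻¹ := by rw [hi, inv_inv]
        refine ⟨(i, false), ?_, ?_⟩
        · intro n; rw [hwi, toWord_pow_neg]
        · intro n; rw [hwi, inv_inv, FreeGroup.toWord_of_pow]; rfl
    obtain ⟨a, hwa, hwia⟩ := ha
    have hxpB : xp = constB a := Subtype.ext (isPlusLimit_unique hwa hp)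
    have hxmB : xm = constB (Letter.inv a) := Subtype.ext (isPlusLimit_unique hwia hm)
    have hx2 : x.1 = concatReduce g.toWord (fun _ => a) := by
      have hxx : x = boundaryAct g xp := hx1
      rw [hxx, hxpB, boundaryAct_const]
    have hy2 : y.1 = concatReduce g.toWord (fun _ => Letter.inv a) := by
      have hyy : y = boundaryAct g xm := hy1
      rw [hyy, hxmB, boundaryAct_const]
    have hraw := rawDec_concat a g.toWord (redList_toWord g)
    rw [dec_eq_iff, hx2, hy2]
    refine ⟨?_, ?_⟩
    · exact congrArg (Prod.fst : Fin d × (ℕ → ℕ) → Fin d) hraw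
    · intro n
      exact congrFun (congrArg (Prod.snd : Fin d × (ℕ → ℕ) → (ℕ → ℕ)) hraw) n

/-! ### Injectivity on the quotient -/

theorem idx_eq_of_dec_eq {x y : Boundary d} (h : dec x = dec y) :
    ∀ n, (x.1 n).1 = (y.1 n).1 := by
  intro n
  induction n with
  | zero => exact (dec_eq_iff.1 h).1
  | succ n ih =>
    have hs := (dec_eq_iff.1 h).2 n
    unfold decSeq at hs
    by_cases hbx : (x.1 (n + 1)).1 = (x.1 n).1
    · have h0 : decPair (x.1 n) (x.1 (n + 1)) = 0 := decPair_eq_zero_iff.2 hbx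
      have h0' : decPair (y.1 n) (y.1 (n + 1)) = 0 := by omega
      have h0'' := decPair_eq_zero_iff.1 h0'
      rw [hbx, ih, h0'']
    · have hby : (y.1 (n + 1)).1 ≠ (y.1 n).1 := by
        intro hc
        have h0' := decPair_eq_zero_iff.2 hc
        have h0 : decPair (x.1 n) (x.1 (n + 1)) = 0 := by omega
        exact hbx (decPair_eq_zero_iff.1 h0)
      exact (decPair_inj ih hbx hby hs).2

theorem sign_of_break {x y : Boundary d} (h : dec x = dec y) {n : ℕ}
    (hb : (x.1 (n + 1)).1 ≠ (x.1 n).1) : x.1 n = y.1 n := by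
  have hs := (dec_eq_iff.1 h).2 n
  unfold decSeq at hs
  have hidx := idx_eq_of_dec_eq h
  have hby : (y.1 (n + 1)).1 ≠ (y.1 n).1 := by
    rw [← hidx (n + 1), ← hidx n]; exact hb
  have hinj := decPair_inj (hidx n) hb hby hs
  exact Prod.ext (hidx n) hinj.1

theorem agree_of_break {x y : Boundary d} (h : dec x = dec y) :
    ∀ j n, (x.1 (n + j + 1)).1 ≠ (x.1 (n + j)).1 → x.1 n = y.1 n := by
  intro j
  induction j with
  | zero =>
    intro n hb
    exact sign_of_break h (by simpa using hb)
  | succ j ih =>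
    intro n hb
    by_cases hbn : (x.1 (n + 1)).1 = (x.1 n).1
    · have hxe : x.1 (n + 1) = x.1 n := eq_of_fst_eq x.2 hbn
      have hbyn : (y.1 (n + 1)).1 = (y.1 n).1 := by
        rw [← idx_eq_of_dec_eq h (n + 1), ← idx_eq_of_dec_eq h n]; exact hbn
      have hye : y.1 (n + 1) = y.1 n := eq_of_fst_eq y.2 hbyn
      have e1 : n + 1 + j = n + (j + 1) := by omega
      have hb' : (x.1 (n + 1 + j + 1)).1 ≠ (x.1 (n + 1 + j)).1 := by
        rw [e1]; exact hb
      have hnext := ih (n + 1) hb'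
      rw [← hxe, ← hye]
      exact hnext
    · exact sign_of_break h hbn

theorem dec_eq_implies {x y : Boundary d} (h : dec x = dec y) :
    (x, y) ∈ RW (Set.range (FreeGroup.of : Fin d → FreeGroup (Fin d))) := by
  classical
  by_cases hQ : ∃ n, ∀ m, n ≤ m → (x.1 (m + 1)).1 = (x.1 m).1
  case neg =>
    refine Or.inl ?_
    show x = y
    apply Subtype.ext; funext n
    push_neg at hQ
    obtain ⟨m, hm1, hm2⟩ := hQ n
    exact agree_of_break h (m - n) n
      (by rw [show n + (m - n) = m by omega]; exact hm2)
  case pos =>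
    have hQk : ∀ m, Nat.find hQ ≤ m → (x.1 (m + 1)).1 = (x.1 m).1 := Nat.find_spec hQ
    set k := Nat.find hQ with hk
    have hmin : ∀ j, j < k → ¬(∀ m, j ≤ m → (x.1 (m + 1)).1 = (x.1 m).1) :=
      fun j hj => Nat.find_min hQ hj
    have tail_x : ∀ n, k ≤ n → x.1 n = x.1 k := by
      intro n hn
      induction n with
      | zero => rw [show k = 0 by omega]
      | succ n ihn =>
        by_cases hkn : k ≤ n
        · rw [eq_of_fst_eq x.2 (hQk n hkn), ihn hkn]
        · rw [show k = n + 1 by omega]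
    have hQky : ∀ m, k ≤ m → (y.1 (m + 1)).1 = (y.1 m).1 := by
      intro m hm
      rw [← idx_eq_of_dec_eq h (m + 1), ← idx_eq_of_dec_eq h m]
      exact hQk m hm
    have tail_y : ∀ n, k ≤ n → y.1 n = y.1 k := by
      intro n hn
      induction n with
      | zero => rw [show k = 0 by omega]
      | succ n ihn =>
        by_cases hkn : k ≤ n
        · rw [eq_of_fst_eq y.2 (hQky n hkn), ihn hkn]
        · rw [show k = n + 1 by omega]
    have prefix_eq : ∀ n, n < k → x.1 n = y.1 n := by
      intro n hn
      have hnm := hmin n hn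
      push_neg at hnm
      obtain ⟨m, hm1, hm2⟩ := hnm
      exact agree_of_break h (m - n) n
        (by rw [show n + (m - n) = m by omega]; exact hm2)
    have hab : (y.1 k).1 = (x.1 k).1 := (idx_eq_of_dec_eq h k).symm
    by_cases habe : y.1 k = x.1 k
    · refine Or.inl ?_
      show x = y
      apply Subtype.ext; funext n
      by_cases hn : n < k
      · exact prefix_eq n hn
      · rw [tail_x n (by omega), tail_y n (by omega), habe]
    · have hbinv : y.1 k = Letter.inv (x.1 k) := letter_inv_of_ne hab habe
      have hbreak : 0 < k → (x.1 (k - 1)).1 ≠ (x.1 k).1 := by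
        intro hk0 hc
        have hnm := hmin (k - 1) (by omega)
        push_neg at hnm
        obtain ⟨m, hm1, hm2⟩ := hnm
        by_cases hmk : k ≤ m
        · exact hm2 (hQk m hmk)
        · have hmeq : m = k - 1 := by omega
          subst hmeq
          apply hm2
          rw [show k - 1 + 1 = k by omega]
          exact hc.symm
      set a := x.1 k with ha
      set v : List (Letter d) := List.ofFn (fun i : Fin k => x.1 i) with hv
      have hvlen : v.length = k := by simp [hv]
      have hvget : ∀ (n : ℕ) (hn : n < v.length), v[n] = x.1 n := by
        intro n hn
        simp [hv]
      have hvred : RedList v := by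
        rw [RedList]; apply List.isChain_iff_getElem.2
        intro i hi
        simp only [List.get_eq_getElem, hvget]
        exact x.2 i
      have hvlast : ∀ (hne : v ≠ []) (c : Letter d), c.1 = a.1 → v.getLast hne ≠ c := by
        intro hne c hc hcon
        have hk0 : 0 < k := by
          by_contra hk0
          apply hne
          have : v.length = 0 := by omega
          exact List.length_eq_zero_iff.1 this
        have hgl : v.getLast hne = v[v.length - 1]'(by omega) := List.getLast_eq_getElem hne
        rw [hgl, hvget] at hcon
        apply hbreak hk0
        rw [show v.length - 1 = k - 1 by omega] at hcon
        rw [hcon, hc]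
      have hx_eq : appC v a = x.1 := by
        funext n
        unfold appC
        by_cases hn : n < v.length
        · rw [dif_pos hn, hvget]
        · rw [dif_neg hn, tail_x n (by omega)]
      have hy_eq : appC v (Letter.inv a) = y.1 := by
        funext n
        unfold appC
        by_cases hn : n < v.length
        · rw [dif_pos hn, hvget]
          exact prefix_eq n (by omega)
        · rw [dif_neg hn, tail_y n (by omega), hbinv]
      refine Or.inr ⟨FreeGroup.mk v, genFor a, constB a, constB (Letter.inv a),
        genFor_mem a, isPlusLimit_genFor a, ?_, ?_, ?_⟩
      · rw [genFor_inv]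
        exact isPlusLimit_genFor (Letter.inv a)
      · show x = boundaryAct (FreeGroup.mk v) (constB a)
        apply Subtype.ext
        rw [boundaryAct_eval v hvred a
          (fun hne => hvlast hne (Letter.inv a) rfl)]
        exact hx_eq.symm
      · show y = boundaryAct (FreeGroup.mk v) (constB (Letter.inv a))
        apply Subtype.ext
        rw [boundaryAct_eval v hvred (Letter.inv a)
          (fun hne => hvlast hne (Letter.inv (Letter.inv a)) (by rw [Letter.inv_invol]))]
        exact hy_eq.symm

end CantorStage1


namespace CantorStage1

open CantorAux

variable {d : ℕ}

/-! ### Surjectivity: decoding a decision stream -/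

/-- The generator index decoded from a nonzero decision `e`, relative to the
current index `p`. -/
def nextIdx (p : Fin d) (e : ℕ) : Fin d :=
  ⟨(if (if e - 1 < d - 1 then e - 1 else e - 1 - (d - 1)) < (p : ℕ)
    then (if e - 1 < d - 1 then e - 1 else e - 1 - (d - 1))
    else (if e - 1 < d - 1 then e - 1 else e - 1 - (d - 1)) + 1) % d,
   Nat.mod_lt _ (by have := p.isLt; omega)⟩

theorem nextIdx_val (p : Fin d) (e : ℕ) (he : 1 ≤ e) (he2 : e ≤ 2 * d - 2) :
    ((nextIdx p e : Fin d) : ℕ) =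
    if (if e - 1 < d - 1 then e - 1 else e - 1 - (d - 1)) < (p : ℕ)
    then (if e - 1 < d - 1 then e - 1 else e - 1 - (d - 1))
    else (if e - 1 < d - 1 then e - 1 else e - 1 - (d - 1)) + 1 := by
  have h1 := p.isLt
  show (if (if e - 1 < d - 1 then e - 1 else e - 1 - (d - 1)) < (p : ℕ)
    then (if e - 1 < d - 1 then e - 1 else e - 1 - (d - 1))
    else (if e - 1 < d - 1 then e - 1 else e - 1 - (d - 1)) + 1) % d = _
  rw [Nat.mod_eq_of_lt (by split_ifs <;> omega)]

theorem nextIdx_ne (p : Fin d) (e : ℕ) (he : 1 ≤ e) (he2 : e ≤ 2 * d - 2) :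
    nextIdx p e ≠ p := by
  have h1 := p.isLt
  intro hc
  have hv := congrArg Fin.val hc
  rw [nextIdx_val p e he he2] at hv
  split_ifs at hv <;> omega

/-- The sign bit encoded in a nonzero decision. -/
def sgnBit (d e : ℕ) : Bool := decide (e - 1 < d - 1)

/-- The index sequence decoded from a decision stream. -/
def idxSeq (c : Fin d) (σ : ℕ → ℕ) : ℕ → Fin d
  | 0 => c
  | n + 1 => if σ n = 0 then idxSeq c σ n else nextIdx (idxSeq c σ n) (σ n)

theorem idxSeq_succ (c : Fin d) (σ : ℕ → ℕ) (n : ℕ) :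
    idxSeq c σ (n + 1) =
      if σ n = 0 then idxSeq c σ n else nextIdx (idxSeq c σ n) (σ n) := rfl

open Classical in
/-- The sign sequence decoded from a decision stream: the sign of position `n`
is revealed by the first nonzero decision at or after `n`. -/
noncomputable def sgnSeq (d : ℕ) (σ : ℕ → ℕ) (n : ℕ) : Bool :=
  if h : ∃ m, n ≤ m ∧ σ m ≠ 0 then sgnBit d (σ (Nat.find h)) else true

theorem sgnSeq_of_ne (σ : ℕ → ℕ) (n : ℕ) (h : σ n ≠ 0) :
    sgnSeq d σ n = sgnBit d (σ n) := by
  classical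
  have hex : ∃ m, n ≤ m ∧ σ m ≠ 0 := ⟨n, le_rfl, h⟩
  unfold sgnSeq
  rw [dif_pos hex]
  have hfind : Nat.find hex = n :=
    le_antisymm (Nat.find_min' hex ⟨le_rfl, h⟩) (Nat.find_spec hex).1
  rw [hfind]

theorem sgnSeq_of_zero (σ : ℕ → ℕ) (n : ℕ) (h : σ n = 0) :
    sgnSeq d σ (n + 1) = sgnSeq d σ n := by
  classical
  by_cases hex : ∃ m, n + 1 ≤ m ∧ σ m ≠ 0
  · obtain ⟨m, hm1, hm2⟩ := hex
    have hex1 : ∃ m, n + 1 ≤ m ∧ σ m ≠ 0 := ⟨m, hm1, hm2⟩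
    have hex0 : ∃ m, n ≤ m ∧ σ m ≠ 0 := ⟨m, by omega, hm2⟩
    unfold sgnSeq
    rw [dif_pos hex1, dif_pos hex0]
    have hfind : Nat.find hex1 = Nat.find hex0 := by
      apply le_antisymm
      · have hspec := Nat.find_spec hex0
        have hne : Nat.find hex0 ≠ n := by
          intro hc
          apply hspec.2
          rw [hc, h]
        exact Nat.find_min' hex1 ⟨by have := hspec.1; omega, hspec.2⟩
      · have hspec := Nat.find_spec hex1
        exact Nat.find_min' hex0 ⟨by have := hspec.1; omega, hspec.2⟩
    rw [hfind]
  · have hex0 : ¬∃ m, n ≤ m ∧ σ m ≠ 0 := by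
      rintro ⟨m, hm1, hm2⟩
      apply hex
      refine ⟨m, ?_, hm2⟩
      rcases Nat.eq_or_lt_of_le hm1 with rfl | hlt
      · exact absurd h hm2
      · omega
    unfold sgnSeq
    rw [dif_neg hex, dif_neg hex0]

/-- The boundary point decoded from `(c, σ)`. -/
noncomputable def decodeSeq (c : Fin d) (σ : ℕ → ℕ) : ℕ → Letter d :=
  fun n => (idxSeq c σ n, sgnSeq d σ n)

theorem decode_isReduced (c : Fin d) (σ : ℕ → ℕ)
    (hσ : ∀ n, σ n ≤ 2 * d - 2) : IsReducedSeq (decodeSeq c σ) := by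
  intro n
  by_cases h : σ n = 0
  · have hidx : idxSeq c σ (n + 1) = idxSeq c σ n := by
      rw [idxSeq_succ, if_pos h]
    have hsgn := sgnSeq_of_zero (d := d) σ n h
    have heq : decodeSeq c σ (n + 1) = decodeSeq c σ n := by
      unfold decodeSeq
      rw [hidx, hsgn]
    rw [heq]
    exact self_ne_inv _
  · intro hc
    have hfst : (decodeSeq c σ (n + 1)).1 = (Letter.inv (decodeSeq c σ n)).1 :=
      congrArg Prod.fst hc
    rw [Letter.inv_fst] at hfst
    have hfst' : idxSeq c σ (n + 1) = idxSeq c σ n := hfst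
    rw [idxSeq_succ, if_neg h] at hfst'
    exact nextIdx_ne _ _ (by omega) (hσ n) hfst'

theorem decPair_next (p : Letter d) (q : Letter d) (e : ℕ) (he : 1 ≤ e)
    (he2 : e ≤ 2 * d - 2) (hsgn : p.2 = sgnBit d e)
    (hq1 : q.1 = nextIdx p.1 e) : decPair p q = e := by
  have h1 := p.1.isLt
  have hne' : q.1 ≠ p.1 := by rw [hq1]; exact nextIdx_ne p.1 e he he2
  unfold decPair
  rw [if_neg hne', hsgn, hq1, nextIdx_val p.1 e he he2]
  have hsb : (if (sgnBit d e) then (0 : ℕ) else d - 1) =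
      if e - 1 < d - 1 then 0 else d - 1 := by
    unfold sgnBit
    by_cases hb : e - 1 < d - 1 <;> simp [hb]
  rw [hsb]
  split_ifs <;> omega

theorem dec_surjective (hd : 2 ≤ d) :
    Function.Surjective (dec : Boundary d → Fin d × (ℕ → Fin (2 * d - 1))) := by
  rintro ⟨c, σ⟩
  refine ⟨⟨decodeSeq c (fun n => (σ n : ℕ)), decode_isReduced c _
    (fun n => by have := (σ n).isLt; omega)⟩, ?_⟩
  unfold dec
  refine Prod.ext rfl ?_
  funext n
  apply Fin.ext
  show decSeq (decodeSeq c (fun n => (σ n : ℕ))) n = (σ n : ℕ)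
  unfold decSeq
  by_cases h : (σ n : ℕ) = 0
  · rw [h]
    apply decPair_eq_zero_iff.2
    have hstep : idxSeq c (fun n => (σ n : ℕ)) (n + 1) = idxSeq c (fun n => (σ n : ℕ)) n := by
      rw [idxSeq_succ, if_pos h]
    exact hstep
  · have hσlt : (σ n : ℕ) < 2 * d - 1 := (σ n).isLt
    have hidx1 : (decodeSeq c (fun n => (σ n : ℕ)) (n + 1)).1 =
        nextIdx (idxSeq c (fun n => (σ n : ℕ)) n) ((σ n : ℕ)) := by
      have hstep : idxSeq c (fun n => (σ n : ℕ)) (n + 1) =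
          nextIdx (idxSeq c (fun n => (σ n : ℕ)) n) ((σ n : ℕ)) := by
        rw [idxSeq_succ, if_neg h]
      exact hstep
    have hsgn : (decodeSeq c (fun n => (σ n : ℕ)) n).2 = sgnBit d ((σ n : ℕ)) :=
      sgnSeq_of_ne _ n h
    calc decPair (decodeSeq c (fun n => (σ n : ℕ)) n) (decodeSeq c (fun n => (σ n : ℕ)) (n + 1))
        = decPair (decodeSeq c (fun n => (σ n : ℕ)) n)
            (nextIdx (decodeSeq c (fun n => (σ n : ℕ)) n).1 ((σ n : ℕ)),
              (decodeSeq c (fun n => (σ n : ℕ)) (n + 1)).2) := by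
          congr 1
          refine Prod.ext ?_ rfl
          exact hidx1
      _ = (σ n : ℕ) := decPair_next _ _ _ (by omega) (by omega) hsgn rfl

/-! ### Continuity and compactness -/

theorem dec_continuous : Continuous (dec : Boundary d → Fin d × (ℕ → Fin (2 * d - 1))) := by
  apply Continuous.prodMk
  · refine continuous_of_dep (fun (x : Boundary d) n => x.1 n)
      (fun n => (continuous_apply n).comp continuous_subtype_val) _ 1 ?_
    intro x y hxy
    have h0 : x.1 0 = y.1 0 := hxy 0 (by omega)
    show (x.1 0).1 = (y.1 0).1
    rw [h0]
  · apply continuous_pi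
    intro n
    refine continuous_of_dep (fun (x : Boundary d) n => x.1 n)
      (fun n => (continuous_apply n).comp continuous_subtype_val) _ (n + 2) ?_
    intro x y hxy
    apply Fin.ext
    show decSeq x.1 n = decSeq y.1 n
    unfold decSeq
    have e1 : x.1 n = y.1 n := hxy n (by omega)
    have e2 : x.1 (n + 1) = y.1 (n + 1) := hxy (n + 1) (by omega)
    rw [e1, e2]

theorem isClosed_reducedSeq : IsClosed {x : ℕ → Letter d | IsReducedSeq x} := by
  rw [← isOpen_compl_iff]
  have hco : {x : ℕ → Letter d | IsReducedSeq x}ᶜ =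
      ⋃ n, (fun x : ℕ → Letter d => (x (n + 1), Letter.inv (x n))) ⁻¹'
        {p : Letter d × Letter d | p.1 = p.2} := by
    ext x
    simp only [Set.mem_compl_iff, Set.mem_setOf_eq, Set.mem_iUnion, Set.mem_preimage,
      IsReducedSeq]
    push_neg
    rfl
  rw [hco]
  apply isOpen_iUnion
  intro n
  apply IsOpen.preimage
  · exact Continuous.prodMk (continuous_apply (n + 1))
      (Continuous.comp (g := Letter.inv) continuous_of_discreteTopology (continuous_apply n))
  · exact isOpen_discrete _

instance : CompactSpace (Boundary d) :=
  isCompact_iff_compactSpace.mp isClosed_reducedSeq.isCompact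

end CantorStage1


/-- The quotient space `∂F_d/R_S`, with the quotient
topology, is homeomorphic to the Cantor set `{0,1}^ℕ`. -/
theorem quotient_by_RS_homeomorphic_cantor (d : ℕ) (hd : 2 ≤ d)
    (hequiv : Equivalence fun x y : Boundary d =>
      (x, y) ∈ RW (Set.range (FreeGroup.of : Fin d → FreeGroup (Fin d)))) :
    Nonempty
      ((Quotient (⟨fun x y => (x, y) ∈
          RW (Set.range (FreeGroup.of : Fin d → FreeGroup (Fin d))), hequiv⟩ :
        Setoid (Boundary d))) ≃ₜ (ℕ → Bool)) := by
  classical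
  set st : Setoid (Boundary d) :=
    ⟨fun x y => (x, y) ∈ RW (Set.range (FreeGroup.of : Fin d → FreeGroup (Fin d))),
      hequiv⟩ with hst
  let F : Quotient st → Fin d × (ℕ → Fin (2 * d - 1)) :=
    Quotient.lift CantorStage1.dec (fun a b hab => CantorStage1.dec_invariant hab)
  have hFc : Continuous F :=
    Continuous.quotient_lift CantorStage1.dec_continuous _
  have hFbij : Function.Bijective F := by
    constructor
    · intro q q'
      refine Quotient.inductionOn₂ q q' ?_
      intro a b hdec
      exact Quotient.sound (CantorStage1.dec_eq_implies hdec)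
    · intro z
      obtain ⟨x, hx⟩ := CantorStage1.dec_surjective hd z
      exact ⟨Quotient.mk st x, hx⟩
  have h1 : Quotient st ≃ₜ Fin d × (ℕ → Fin (2 * d - 1)) :=
    Continuous.homeoOfEquivCompactToT2 (f := Equiv.ofBijective F hFbij) hFc
  have h2 : (ℕ → Fin (2 * d - 1)) ≃ₜ (ℕ → Bool) :=
    CantorAux.homeoPiFin (2 * d - 1) (by omega)
  have h3 : (Fin d × (ℕ → Bool)) ≃ₜ (ℕ → Bool) := CantorAux.homeoProdFin d hd
  exact ⟨h1.trans ((Homeomorph.prodCongr (Homeomorph.refl (Fin d)) h2).trans h3)⟩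
end
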